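/- (Correctness of the compiler.) Let M be a PTIME TM with tape alphabet Γ and input alphabet Σ, together with an encoding as in the simulation setup. Then there exists a term T of ForNo such that for every input w ∈ Σ*: if M started from the configuration (ε, q₀, w) reaches a halting configuration c_HALT, then ⟨T, (∅[rgt → ⟨⟨w⟩⟩], 0)⟩ ⇓ τ for some state τ that cleanly simulates c_HALT (τ ≅ c_HALT). -/
import Mathlib


set_option linter.unusedVariables false

namespace ForNo

/-- Registers. -/
abbrev Reg := ℕ
/-- Stacks of natural numbers; the head is the top. -/
abbrev Stack := List ℕ
/-- Stores map registers to stacks. -/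
abbrev Store := Reg → Stack
/-- A state is a store together with an error counter. -/
abbrev FState := Store × ℕ

/-- The store mapping every register to the empty stack. -/
def emptyStore : Store := fun _ => []

/-- Store update. -/
def upd (φ : Store) (x : Reg) (s : Stack) : Store := fun y => if y = x then s else φ y

/-- Counter-guarded push operation. -/
def pushOp (n : ℕ) : Stack × ℕ → Stack × ℕ
  | (s, 0) => (n :: s, 0)
  | (s, c + 1) => if s.head? = some n then (s, c + 1) else (s, c)

/-- Counter-guarded pop operation. -/
def popOp (n : ℕ) : Stack × ℕ → Stack × ℕ
  | (s, c) =>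
      if s.head? = some n then
        match c with
        | 0 => (s.tail, 0)
        | c + 1 => (s, c + 1)
      else (s, c + 1)

mutual
  /-- Terms of the (raw) language. -/
  inductive Term : Type where
    | skip : Term
    | push : ℕ → Reg → Term
    | pop : ℕ → Reg → Term
    | seq : Term → Term → Term
    | ifeq : Reg → ℕ → Term → Term
    | normal : List Reg → Term → Term
    | fort : Reg → Bodies → Term
    | roft : Reg → Bodies → Term
  /-- Nonempty lists of iteration bodies. -/
  inductive Bodies : Type where
    | single : Term → Bodies
    | cons : Term → Bodies → Bodies
end

/-- `ps.get i` is `P_min(i,m)` where `ps = P₀ … P_m`. -/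
def Bodies.get : Bodies → ℕ → Term
  | .single t, _ => t
  | .cons t _, 0 => t
  | .cons _ ps, i + 1 => ps.get i

mutual
  /-- Big-step operational semantics `⟨T, ω⟩ ⇓ ω'`. -/
  inductive Eval : Term → FState → FState → Prop where
    | skip : ∀ ω, Eval .skip ω ω
    | seq : ∀ {t u : Term} {ω ω' ω'' : FState},
        Eval t ω ω' → Eval u ω' ω'' → Eval (.seq t u) ω ω''
    | push : ∀ (n : ℕ) (x : Reg) (φ : Store) (c : ℕ),
        Eval (.push n x) (φ, c) (upd φ x (pushOp n (φ x, c)).1, (pushOp n (φ x, c)).2)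
    | pop : ∀ (n : ℕ) (x : Reg) (φ : Store) (c : ℕ),
        Eval (.pop n x) (φ, c) (upd φ x (popOp n (φ x, c)).1, (popOp n (φ x, c)).2)
    | ifeq_true : ∀ {x n t} {φ : Store} {c : ℕ} {ω' : FState},
        (φ x).head? = some n → Eval t (φ, c) ω' → Eval (.ifeq x n t) (φ, c) ω'
    | ifeq_false : ∀ {x n t} (φ : Store) (c : ℕ),
        (φ x).head? ≠ some n → Eval (.ifeq x n t) (φ, c) (φ, c)
    | normal : ∀ {xs t ω ω'}, Eval t ω ω' → Eval (.normal xs t) ω ω'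
    | fort : ∀ {x ps ω ω'}, EvalList (ω.1 x) ps ω ω' → Eval (.fort x ps) ω ω'
    | roft : ∀ {x ps ω ω'}, EvalList (ω.1 x).reverse ps ω ω' → Eval (.roft x ps) ω ω'
  /-- Iteration judgment `⟦s, ps, ω⟧ ⇓ ω'`. -/
  inductive EvalList : Stack → Bodies → FState → FState → Prop where
    | nil : ∀ (ps : Bodies) (ω : FState), EvalList [] ps ω ω
    | cons : ∀ {i : ℕ} {t : Stack} {ps : Bodies} {ω ω'' ω' : FState},
        Eval (ps.get i) ω ω'' → EvalList t ps ω'' ω' → EvalList (i :: t) ps ω ω'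
end

mutual
  /-- The inversion map `−(·)` on terms. -/
  def Term.inv : Term → Term
    | .skip => .skip
    | .push n x => .pop n x
    | .pop n x => .push n x
    | .seq t u => .seq u.inv t.inv
    | .ifeq x n t => .ifeq x n t.inv
    | .normal xs t => .normal xs t.inv
    | .fort x ps => .roft x ps.inv
    | .roft x ps => .fort x ps.inv
  def Bodies.inv : Bodies → Bodies
    | .single t => .single t.inv
    | .cons t ps => .cons t.inv ps.inv
end

mutual
  /-- `t.Writes y` holds iff some `PUSH`/`POP` occurring in `t` writes register `y`. -/
  def Term.Writes : Term → Reg → Prop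
    | .skip, _ => False
    | .push _ x, y => x = y
    | .pop _ x, y => x = y
    | .seq t u, y => t.Writes y ∨ u.Writes y
    | .ifeq _ _ t, y => t.Writes y
    | .normal _ t, y => t.Writes y
    | .fort _ ps, y => ps.Writes y
    | .roft _ ps, y => ps.Writes y
  def Bodies.Writes : Bodies → Reg → Prop
    | .single t, y => t.Writes y
    | .cons t ps, y => t.Writes y ∨ ps.Writes y
end

mutual
  /-- `t.Leads y` holds iff `y` leads some `FOR`/`ROF` iteration occurring in `t`. -/
  def Term.Leads : Term → Reg → Prop
    | .skip, _ => False
    | .push _ _, _ => False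
    | .pop _ _, _ => False
    | .seq t u, y => t.Leads y ∨ u.Leads y
    | .ifeq _ _ t, y => t.Leads y
    | .normal _ t, y => t.Leads y
    | .fort x ps, y => x = y ∨ ps.Leads y
    | .roft x ps, y => x = y ∨ ps.Leads y
  def Bodies.Leads : Bodies → Reg → Prop
    | .single t, y => t.Leads y
    | .cons t ps, y => t.Leads y ∨ ps.Leads y
end

mutual
  /-- `t.Mentions y` holds iff register `y` occurs in `t`. -/
  def Term.Mentions : Term → Reg → Prop
    | .skip, _ => False
    | .push _ x, y => x = y
    | .pop _ x, y => x = y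
    | .seq t u, y => t.Mentions y ∨ u.Mentions y
    | .ifeq x _ t, y => x = y ∨ t.Mentions y
    | .normal xs t, y => y ∈ xs ∨ t.Mentions y
    | .fort x ps, y => x = y ∨ ps.Mentions y
    | .roft x ps, y => x = y ∨ ps.Mentions y
  def Bodies.Mentions : Bodies → Reg → Prop
    | .single t, y => t.Mentions y
    | .cons t ps, y => t.Mentions y ∨ ps.Mentions y
end

mutual
  /-- The finite set of registers occurring in a term. -/
  def Term.regs : Term → Finset Reg
    | .skip => ∅
    | .push _ x => {x}
    | .pop _ x => {x}
    | .seq t u => t.regs ∪ u.regs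
    | .ifeq x _ t => insert x t.regs
    | .normal xs t => xs.toFinset ∪ t.regs
    | .fort x ps => insert x ps.regs
    | .roft x ps => insert x ps.regs
  def Bodies.regs : Bodies → Finset Reg
    | .single t => t.regs
    | .cons t ps => t.regs ∪ ps.regs
end

mutual
  /-- Safe terms: generated by the grammar `S` (no `NORMAL`). -/
  def Term.Safe : Term → Prop
    | .skip => True
    | .push _ _ => True
    | .pop _ _ => True
    | .seq t u => t.Safe ∧ u.Safe
    | .ifeq _ _ t => t.Safe
    | .normal _ _ => False
    | .fort _ ps => ps.Safe
    | .roft _ ps => ps.Safe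
  def Bodies.Safe : Bodies → Prop
    | .single t => t.Safe
    | .cons t ps => t.Safe ∧ ps.Safe
end

/-- Raw terms: generated by the grammar `T` (iterations only inside `NORMAL` bodies,
which must be safe). -/
def Term.Raw : Term → Prop
  | .skip => True
  | .push _ _ => True
  | .pop _ _ => True
  | .seq t u => t.Raw ∧ u.Raw
  | .ifeq _ _ t => t.Raw
  | .normal _ t => t.Safe
  | .fort _ _ => False
  | .roft _ _ => False

mutual
  /-- The read-only constraints (i) and (ii) defining membership in ForNo. -/
  def Term.WF : Term → Prop
    | .skip => True
    | .push _ _ => True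
    | .pop _ _ => True
    | .seq t u => t.WF ∧ u.WF
    | .ifeq x _ t => t.WF ∧ ¬ t.Writes x
    | .normal xs t => t.WF ∧ (∀ x ∈ xs, ¬ t.Writes x) ∧ (∀ y, t.Leads y → y ∈ xs)
    | .fort x ps => ps.WF ∧ ¬ ps.Writes x
    | .roft x ps => ps.WF ∧ ¬ ps.Writes x
  def Bodies.WF : Bodies → Prop
    | .single t => t.WF
    | .cons t ps => t.WF ∧ ps.WF
end

/-- A raw term is in ForNo if it satisfies the read-only constraints. -/
def InForNo (t : Term) : Prop := t.Raw ∧ t.WF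

/-- `iterSeq t k` is the `k`-fold sequential composition `t;…;t` (`SKIP` for `k = 0`). -/
def iterSeq (t : Term) : ℕ → Term
  | 0 => .skip
  | 1 => t
  | n + 2 => .seq t (iterSeq t (n + 1))

/-- `mkBodiesAux g i k` is the list of bodies `g i, g (i+1), …, g (i+k)`. -/
def mkBodiesAux (g : ℕ → Term) : ℕ → ℕ → Bodies
  | i, 0 => .single (g i)
  | i, k + 1 => .cons (g i) (mkBodiesAux g (i + 1) k)

/-- `mkBodies g k` is the list of bodies `g 0, g 1, …, g k`. -/
def mkBodies (g : ℕ → Term) (k : ℕ) : Bodies := mkBodiesAux g 0 k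

/-- `COPY(x,y)` with bodies `PUSH[0] y, …, PUSH[k] y`. -/
def COPY (x y : Reg) (k : ℕ) : Term :=
  .normal [x] (.roft x (mkBodies (fun i => .push i y) k))

/-- `n` nested `FOR rgt` iterations around `PUSH[1] p`. -/
def powNest (rgt p : Reg) : ℕ → Term
  | 0 => .push 1 p
  | n + 1 => .fort rgt (.single (powNest rgt p n))

/-- The term `POW^n`. -/
def POW (rgt p : Reg) (n : ℕ) : Term := .normal [rgt] (powNest rgt p n)

/-- The term `REMOVE-BLANKS` for tape alphabet codes `{0,…,n−1}` and
input alphabet codes `{0,…,m−1}`. -/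
def REMOVEBLANKS (rgt g1 : Reg) (n m : ℕ) : Term :=
  .seq (.normal [rgt] (.roft rgt (mkBodies (fun i => .push i g1) (n - 1))))
       (.normal [g1]
         (.seq (.fort g1 (mkBodies (fun i => .pop i rgt) (n - 1)))
               (.roft g1 (mkBodies (fun i => if i < m then .push i rgt else .skip) m))))

mutual
  /-- Big-step semantics instrumented with the number of rule applications
  in the derivation. -/
  inductive EvalN : ℕ → Term → FState → FState → Prop where
    | skip : ∀ ω, EvalN 1 .skip ω ω
    | seq : ∀ {k l : ℕ} {t u : Term} {ω ω' ω'' : FState},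
        EvalN k t ω ω' → EvalN l u ω' ω'' → EvalN (k + l + 1) (.seq t u) ω ω''
    | push : ∀ (n : ℕ) (x : Reg) (φ : Store) (c : ℕ),
        EvalN 1 (.push n x) (φ, c) (upd φ x (pushOp n (φ x, c)).1, (pushOp n (φ x, c)).2)
    | pop : ∀ (n : ℕ) (x : Reg) (φ : Store) (c : ℕ),
        EvalN 1 (.pop n x) (φ, c) (upd φ x (popOp n (φ x, c)).1, (popOp n (φ x, c)).2)
    | ifeq_true : ∀ {k x n t} {φ : Store} {c : ℕ} {ω' : FState},
        (φ x).head? = some n → EvalN k t (φ, c) ω' → EvalN (k + 1) (.ifeq x n t) (φ, c) ω'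
    | ifeq_false : ∀ {x n t} (φ : Store) (c : ℕ),
        (φ x).head? ≠ some n → EvalN 1 (.ifeq x n t) (φ, c) (φ, c)
    | normal : ∀ {k xs t ω ω'}, EvalN k t ω ω' → EvalN (k + 1) (.normal xs t) ω ω'
    | fort : ∀ {k x ps ω ω'}, EvalListN k (ω.1 x) ps ω ω' → EvalN (k + 1) (.fort x ps) ω ω'
    | roft : ∀ {k x ps ω ω'}, EvalListN k (ω.1 x).reverse ps ω ω' → EvalN (k + 1) (.roft x ps) ω ω'
  inductive EvalListN : ℕ → Stack → Bodies → FState → FState → Prop where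
    | nil : ∀ (ps : Bodies) (ω : FState), EvalListN 1 [] ps ω ω
    | cons : ∀ {k l : ℕ} {i : ℕ} {t : Stack} {ps : Bodies} {ω ω'' ω' : FState},
        EvalN k (ps.get i) ω ω'' → EvalListN l t ps ω'' ω' →
        EvalListN (k + l + 1) (i :: t) ps ω ω'
end

/-! ### Turing machines -/

/-- Deterministic one-tape Turing machines with a semi-infinite tape, input/output
alphabet `S` embedded in the tape alphabet `Γ`, and direction `Bool`
(`false` = left, `true` = right). -/
structure TM (S : Type) where
  Q : Type
  finQ : Fintype Q
  q0 : Q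
  qhalt : Q
  Γ : Type
  finΓ : Fintype Γ
  decΓ : DecidableEq Γ
  blank : Γ
  embed : S → Γ
  embed_inj : Function.Injective embed
  blank_notin : ∀ a, embed a ≠ blank
  δ : Q → Γ → Q × Γ × Bool

namespace TM

variable {S : Type}

/-- Configurations `(u, q, v)`: left tape part (nearest cell first), current state,
right tape part starting with the scanned cell (no trailing blanks). -/
abbrev Config (M : TM S) : Type := List M.Γ × M.Q × List M.Γ

/-- Remove the trailing blanks of a list. -/
def trim (M : TM S) (l : List M.Γ) : List M.Γ :=
  letI := M.decΓ
  (l.reverse.dropWhile (fun a => decide (a = M.blank))).reverse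

/-- The single-step transition function. -/
def stepFn (M : TM S) (c : M.Config) : M.Config :=
  let u := c.1
  let q := c.2.1
  let v := c.2.2
  let a := v.headD M.blank
  let r := M.δ q a
  if r.2.2 then (r.2.1 :: u, r.1, v.tail)
  else (u.tail, r.1, M.trim (u.headD M.blank :: r.2.1 :: v.tail))

/-- Single-step transition relation `c ⇝ c'`. -/
def Step (M : TM S) (c c' : M.Config) : Prop := c.2.1 ≠ M.qhalt ∧ c' = M.stepFn c

/-- `n`-step transition relation `c ⇝ⁿ c'`. -/
def Steps (M : TM S) : ℕ → M.Config → M.Config → Prop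
  | 0 => fun c c' => c = c'
  | n + 1 => fun c c'' => ∃ c', M.Step c c' ∧ M.Steps n c' c''

/-- The initial configuration on input `w`. -/
def init (M : TM S) (w : List S) : M.Config := ([], M.q0, w.map M.embed)

/-- `M` is a polynomial-time Turing machine. -/
def PTime (M : TM S) : Prop :=
  ∃ a b : ℕ, 0 < a ∧ 0 < b ∧ ∀ w : List S,
    ∃ k ≤ a * w.length ^ b, ∃ c : M.Config, M.Steps k (M.init w) c ∧ c.2.1 = M.qhalt

end TM

/-- `f` is computable in polynomial time. -/
def FPTime {S : Type} (f : List S → List S) : Prop :=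
  ∃ M : TM S, M.PTime ∧
    ∀ w : List S, ∃ k : ℕ, M.Steps k (M.init w) ([], M.qhalt, (f w).map M.embed)

/-- `f` is honest: the input length is polynomially bounded in the output length. -/
def Honest {S : Type} (f : List S → List S) : Prop :=
  ∃ q : Polynomial ℕ, ∀ x : List S, x.length ≤ q.eval (f x).length

/-! ### Encodings and computed functions -/

/-- An encoding of a finite alphabet `S`: a bijection onto `{0, …, |S| − 1}`. -/
structure Encoding (S : Type) [Fintype S] where
  enc : S → ℕ
  inj : Function.Injective enc
  lt : ∀ a, enc a < Fintype.card S

/-- Encoding of strings as stacks. -/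
def Encoding.encStr {S : Type} [Fintype S] (e : Encoding S) (w : List S) : Stack :=
  w.map e.enc

/-- `T` (with input register `rin` and output register `rout`) computes `f`. -/
def Computes {S : Type} [Fintype S] (e : Encoding S) (T : Term) (rin rout : Reg)
    (f : List S → List S) : Prop :=
  ∀ x : List S, ∃ φ : Store,
    Eval T (upd emptyStore rin (e.encStr x), 0) (φ, 0) ∧ φ rout = e.encStr (f x)

/-- `T` computes `f` with zero-garbage. -/
def ComputesZG {S : Type} [Fintype S] (e : Encoding S) (T : Term) (rin rout : Reg)
    (f : List S → List S) : Prop :=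
  ∀ x : List S, ∃ φ : Store,
    Eval T (upd emptyStore rin (e.encStr x), 0) (φ, 0) ∧ φ rout = e.encStr (f x) ∧
    ∀ y : Reg, y ≠ rout → φ y = []

/-! ### Simulation of Turing machines -/

/-- The register holding the left part of the tape. -/
def lftR : Reg := 0
/-- The register holding the current state. -/
def qR : Reg := 1
/-- The register holding the right part of the tape. -/
def rgtR : Reg := 2

/-- `σ` simulates configuration `c` (written `σ ≈ c`). -/
def Sim {S : Type} (M : TM S) (encΓ : M.Γ → ℕ) (encQ : M.Q → ℕ)
    (σ : FState) (c : M.Config) : Prop :=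
  σ.2 = 0 ∧
  σ.1 lftR = c.1.map encΓ ∧
  (σ.1 qR).head? = some (encQ c.2.1) ∧
  ∃ bs : Stack, (∀ b ∈ bs, b = encΓ M.blank) ∧ σ.1 rgtR = c.2.2.map encΓ ++ bs

/-- `σ` cleanly simulates configuration `c` (written `σ ≅ c`). -/
def SimClean {S : Type} (M : TM S) (encΓ : M.Γ → ℕ) (encQ : M.Q → ℕ)
    (σ : FState) (c : M.Config) : Prop :=
  σ.2 = 0 ∧
  σ.1 lftR = c.1.map encΓ ∧
  (σ.1 qR).head? = some (encQ c.2.1) ∧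
  σ.1 rgtR = c.2.2.map encΓ

/-- The hypotheses of the simulation setup: `encΓ` is a bijection of `Γ` onto
`{0,…,n−1}` giving non-input characters larger codes than input characters,
and `encQ` is an injective encoding of states. -/
def SimSetup {S : Type} (M : TM S) (encΓ : M.Γ → ℕ) (encQ : M.Q → ℕ) : Prop :=
  Function.Injective encΓ ∧
  (∀ a : M.Γ, encΓ a < @Fintype.card M.Γ M.finΓ) ∧
  (∀ a : M.Γ, (∀ s : S, M.embed s ≠ a) → ∀ s : S, encΓ (M.embed s) < encΓ a) ∧
  Function.Injective encQ

end ForNo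

namespace ForNo

@[simp] lemma upd_self (φ : Store) (x : Reg) (s : Stack) : upd φ x s x = s := by simp [upd]
lemma upd_ne (φ : Store) {x y : Reg} (s : Stack) (h : y ≠ x) : upd φ x s y = φ y := by
  simp [upd, h]

lemma get_writes : ∀ (ps : Bodies) (i : ℕ) (y : Reg), (ps.get i).Writes y → ps.Writes y
  | .single _, _, _, h => h
  | .cons _ _, 0, _, h => Or.inl h
  | .cons _ ps, i+1, y, h => Or.inr (get_writes ps i y h)

theorem eval_writes : ∀ {t : Term} {σ σ' : FState}, Eval t σ σ' →
    ∀ y, ¬ t.Writes y → σ'.1 y = σ.1 y := by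
  intro t σ σ' h
  refine @Eval.rec
    (fun t σ σ' _ => ∀ y, ¬ t.Writes y → σ'.1 y = σ.1 y)
    (fun s ps σ σ' _ => ∀ y, ¬ ps.Writes y → σ'.1 y = σ.1 y)
    ?_ ?_ ?_ ?_ ?_ ?_ ?_ ?_ ?_ ?_ ?_ t σ σ' h
  · intro ω y _; rfl
  · intro t u ω ω' ω'' _ _ ih1 ih2 y hw
    simp only [Term.Writes] at hw
    push_neg at hw
    rw [ih2 y hw.2, ih1 y hw.1]
  · intro n x φ c y hw
    simp only [Term.Writes] at hw
    exact upd_ne _ _ (fun h => hw h.symm)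
  · intro n x φ c y hw
    simp only [Term.Writes] at hw
    exact upd_ne _ _ (fun h => hw h.symm)
  · intro x n t φ c ω' _ _ ih y hw; exact ih y hw
  · intro x n t φ c _ y _; rfl
  · intro xs t ω ω' _ ih y hw; exact ih y hw
  · intro x ps ω ω' _ ih y hw; exact ih y hw
  · intro x ps ω ω' _ ih y hw; exact ih y hw
  · intro ps ω y _; rfl
  · intro i s ps ω ω'' ω' _ _ ih1 ih2 y hw
    rw [ih2 y hw, ih1 y (fun h => hw (get_writes ps i y h))]

/-- Sequencing a list of terms. -/
def seqList : List Term → Term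
  | [] => .skip
  | t :: l => .seq t (seqList l)

lemma eval_seqList : ∀ {l : List Term} {σ σ' : FState},
    (match l with
      | [] => σ' = σ
      | t :: l' => ∃ ω, Eval t σ ω ∧ Eval (seqList l') ω σ') →
    Eval (seqList l) σ σ' := by
  intro l σ σ' h
  cases l with
  | nil => cases h; exact .skip σ
  | cons t l' => obtain ⟨ω, h1, h2⟩ := h; exact .seq h1 h2

lemma seqList_not_writes {l : List Term} {y : Reg} (h : ∀ t ∈ l, ¬ t.Writes y) :
    ¬ (seqList l).Writes y := by
  induction l with
  | nil => simp [seqList, Term.Writes]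
  | cons t l ih =>
    simp only [seqList, Term.Writes]
    rintro (h1 | h2)
    · exact h t (by simp) h1
    · exact ih (fun u hu => h u (by simp [hu])) h2

lemma seqList_not_leads {l : List Term} {y : Reg} (h : ∀ t ∈ l, ¬ t.Leads y) :
    ¬ (seqList l).Leads y := by
  induction l with
  | nil => simp [seqList, Term.Leads]
  | cons t l ih =>
    simp only [seqList, Term.Leads]
    rintro (h1 | h2)
    · exact h t (by simp) h1
    · exact ih (fun u hu => h u (by simp [hu])) h2

lemma seqList_safe {l : List Term} (h : ∀ t ∈ l, t.Safe) : (seqList l).Safe := by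
  induction l with
  | nil => trivial
  | cons t l ih => exact ⟨h t (by simp), ih (fun u hu => h u (by simp [hu]))⟩

lemma seqList_wf {l : List Term} (h : ∀ t ∈ l, t.WF) : (seqList l).WF := by
  induction l with
  | nil => trivial
  | cons t l ih => exact ⟨h t (by simp), ih (fun u hu => h u (by simp [hu]))⟩

lemma eval_push0 (n : ℕ) (x : Reg) (φ : Store) :
    Eval (.push n x) (φ, 0) (upd φ x (n :: φ x), 0) := by
  simpa [pushOp] using Eval.push n x φ 0

lemma eval_pop0 {n : ℕ} {x : Reg} {φ : Store} {s : Stack} (h : φ x = n :: s) :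
    Eval (.pop n x) (φ, 0) (upd φ x s, 0) := by
  have := Eval.pop n x φ 0
  rw [h] at this
  simpa [popOp] using this

end ForNo
namespace ForNo

/-- Dispatch on the head of register `r`: for each `x` in `l`, if the head of `r`
is `v x`, run `B x`. -/
def dispatch {A : Type*} (r : Reg) (v : A → ℕ) (B : A → Term) (l : List A) : Term :=
  seqList (l.map (fun x => .ifeq r (v x) (B x)))

lemma dispatch_not_writes {A : Type*} {r : Reg} {v : A → ℕ} {B : A → Term} {l : List A}
    {y : Reg} (h : ∀ x ∈ l, ¬ (B x).Writes y) : ¬ (dispatch r v B l).Writes y := by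
  apply seqList_not_writes
  intro t ht
  simp only [List.mem_map] at ht
  obtain ⟨x, hx, rfl⟩ := ht
  exact h x hx

lemma dispatch_not_leads {A : Type*} {r : Reg} {v : A → ℕ} {B : A → Term} {l : List A}
    {y : Reg} (h : ∀ x ∈ l, ¬ (B x).Leads y) : ¬ (dispatch r v B l).Leads y := by
  apply seqList_not_leads
  intro t ht
  simp only [List.mem_map] at ht
  obtain ⟨x, hx, rfl⟩ := ht
  exact h x hx

lemma dispatch_safe {A : Type*} {r : Reg} {v : A → ℕ} {B : A → Term} {l : List A}
    (h : ∀ x ∈ l, (B x).Safe) : (dispatch r v B l).Safe := by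
  apply seqList_safe
  intro t ht
  simp only [List.mem_map] at ht
  obtain ⟨x, hx, rfl⟩ := ht
  exact h x hx

lemma dispatch_wf {A : Type*} {r : Reg} {v : A → ℕ} {B : A → Term} {l : List A}
    (h : ∀ x ∈ l, (B x).WF) (h2 : ∀ x ∈ l, ¬ (B x).Writes r) : (dispatch r v B l).WF := by
  apply seqList_wf
  intro t ht
  simp only [List.mem_map] at ht
  obtain ⟨x, hx, rfl⟩ := ht
  exact ⟨h x hx, h2 x hx⟩

lemma dispatch_miss {A : Type*} {r : Reg} {v : A → ℕ} {B : A → Term} {l : List A}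
    {φ : Store} {c : ℕ} (h : ∀ x ∈ l, (φ r).head? ≠ some (v x)) :
    Eval (dispatch r v B l) (φ, c) (φ, c) := by
  induction l with
  | nil => exact .skip _
  | cons x l ih =>
    refine .seq (Eval.ifeq_false φ c (h x (by simp))) (ih (fun x hx => h x (by simp [hx])))

lemma dispatch_fire {A : Type*} {r : Reg} {v : A → ℕ} {B : A → Term} {l : List A}
    {x0 : A} {φ : Store} {c : ℕ} {σ' : FState}
    (hnd : l.Nodup) (hmem : x0 ∈ l) (hinj : ∀ x ∈ l, v x = v x0 → x = x0)
    (hhead : (φ r).head? = some (v x0))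
    (hw : ∀ x ∈ l, ¬ (B x).Writes r)
    (hB : Eval (B x0) (φ, c) σ') (hc : σ'.2 = c) :
    Eval (dispatch r v B l) (φ, c) σ' := by
  induction l with
  | nil => cases hmem
  | cons x l ih =>
    rcases List.mem_cons.mp hmem with rfl | hmem'
    · refine .seq (Eval.ifeq_true hhead hB) ?_
      have hr : σ'.1 r = φ r := eval_writes hB r (hw x0 (by simp))
      obtain ⟨φ', c'⟩ := σ'
      simp only at hr hc
      subst hc
      apply dispatch_miss
      intro x hx
      rw [hr, hhead]
      intro hcon
      have := hinj x (by simp [hx]) (by injection hcon with h; omega)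
      subst this
      exact (List.nodup_cons.mp hnd).1 hx
    · have hx0ne : x ≠ x0 := by
        rintro rfl; exact (List.nodup_cons.mp hnd).1 hmem'
      refine .seq (Eval.ifeq_false φ c ?_) ?_
      · rw [hhead]
        intro hcon
        exact hx0ne (hinj x (by simp) (by injection hcon with h; omega))
      · exact ih (List.nodup_cons.mp hnd).2 hmem'
          (fun x hx hv => hinj x (by simp [hx]) hv) (fun x hx => hw x (by simp [hx]))

end ForNo
namespace ForNo
namespace TM
variable {S : Type} (M : TM S)

lemma steps_iterate : ∀ (k : ℕ) (c c' : M.Config), M.Steps k c c' →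
    c' = M.stepFn^[k] c ∧ ∀ j < k, (M.stepFn^[j] c).2.1 ≠ M.qhalt := by
  intro k
  induction k with
  | zero => intro c c' h; exact ⟨h.symm, by omega⟩
  | succ k ih =>
    intro c c' h
    obtain ⟨c1, ⟨hne, rfl⟩, hs⟩ := h
    obtain ⟨h1, h2⟩ := ih _ _ hs
    constructor
    · rw [h1, Function.iterate_succ_apply]
    · intro j hj
      cases j with
      | zero => exact hne
      | succ j =>
        rw [Function.iterate_succ_apply]
        exact h2 j (by omega)

lemma steps_halt_unique : ∀ (k k' : ℕ) (c c1 c2 : M.Config), M.Steps k c c1 → M.Steps k' c c2 →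
    c1.2.1 = M.qhalt → c2.2.1 = M.qhalt → k = k' ∧ c1 = c2 := by
  intro k
  induction k with
  | zero =>
    intro k' c c1 c2 h h' h1 h2
    cases h
    cases k' with
    | zero => exact ⟨rfl, h'⟩
    | succ k' => obtain ⟨d, ⟨hne, _⟩, _⟩ := h'; exact absurd h1 hne
  | succ k ih =>
    intro k' c c1 c2 h h' h1 h2
    obtain ⟨d, ⟨hne, rfl⟩, hs⟩ := h
    cases k' with
    | zero => cases h'; exact absurd h2 hne
    | succ k' =>
      obtain ⟨d', ⟨_, rfl⟩, hs'⟩ := h'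
      obtain ⟨hk, hc⟩ := ih k' _ _ _ hs hs' h1 h2
      exact ⟨by omega, hc⟩

/-- `l` has no trailing blank. -/
def NoTB (l : List M.Γ) : Prop := ∀ x, l.getLast? = some x → x ≠ M.blank

lemma noTB_nil : M.NoTB [] := by intro x hx; simp at hx

lemma noTB_map_embed (w : List S) : M.NoTB (w.map M.embed) := by
  intro x hx
  rw [List.getLast?_map] at hx
  simp only [Option.map_eq_some_iff] at hx
  obtain ⟨s, _, rfl⟩ := hx
  exact M.blank_notin s

lemma noTB_tail {l : List M.Γ} (h : M.NoTB l) : M.NoTB l.tail := by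
  cases l with
  | nil => exact h
  | cons x xs =>
    cases xs with
    | nil => exact M.noTB_nil
    | cons y ys =>
      intro z hz
      apply h z
      simpa using hz

lemma noTB_trim (l : List M.Γ) : M.NoTB (M.trim l) := by
  letI := M.decΓ
  intro x hx hblank
  subst hblank
  unfold trim at hx
  rw [List.getLast?_reverse] at hx
  have := List.head?_dropWhile_not (fun a => decide (a = M.blank)) l.reverse
  rw [hx] at this
  simp at this

lemma trim_decomp (l : List M.Γ) : ∃ s, l = M.trim l ++ s ∧ ∀ x ∈ s, x = M.blank := by
  letI := M.decΓ
  refine ⟨(l.reverse.takeWhile (fun a => decide (a = M.blank))).reverse, ?_, ?_⟩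
  · unfold trim
    rw [← List.reverse_append, List.takeWhile_append_dropWhile, List.reverse_reverse]
  · intro x hx
    rw [List.mem_reverse] at hx
    have := List.mem_takeWhile_imp hx
    simpa using this

lemma trim_eq_self {l : List M.Γ} (h : M.NoTB l) : M.trim l = l := by
  letI := M.decΓ
  unfold trim
  have hd : List.dropWhile (fun a => decide (a = M.blank)) l.reverse = l.reverse := by
    cases hrev : l.reverse with
    | nil => simp
    | cons a as =>
      have ha : a ≠ M.blank := by
        apply h
        rw [← List.head?_reverse, hrev]
        rfl
      simp [List.dropWhile_cons, ha]
  rw [hd, List.reverse_reverse]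

lemma noTB_stepFn {c : M.Config} (h : M.NoTB c.2.2) : M.NoTB (M.stepFn c).2.2 := by
  unfold stepFn
  by_cases hd : (M.δ c.2.1 (c.2.2.headD M.blank)).2.2
  · simp only [hd, if_true]
    exact M.noTB_tail h
  · simp only [hd, if_false]
    exact M.noTB_trim _

lemma noTB_iterate (w : List S) (j : ℕ) : M.NoTB ((M.stepFn^[j] (M.init w)).2.2) := by
  induction j with
  | zero => exact M.noTB_map_embed w
  | succ j ih =>
    rw [Function.iterate_succ_apply']
    exact M.noTB_stepFn ih

end TM
end ForNo
namespace ForNo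

/-- Auxiliary registers. -/
def pR : Reg := 3
def tR : Reg := 4
def t2R : Reg := 5
def gR : Reg := 6
def fR : Reg := 7
def g2R : Reg := 8

section Compile

variable {S : Type} (M : TM S) (eΓ : M.Γ → ℕ) (eQ : M.Q → ℕ)

/-- Size of the tape alphabet. -/
def nΓ : ℕ := @Fintype.card M.Γ M.finΓ

/-- Code of the blank character. -/
def blc : ℕ := eΓ M.blank

/-- Code of a (state, character) pair. -/
def code (q : M.Q) (c : M.Γ) : ℕ := eQ q * nΓ M + eΓ c + 1

/-- List of all tape characters. -/
noncomputable def Γlist : List M.Γ := (@Finset.univ M.Γ M.finΓ).toList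

/-- List of all optional tape characters. -/
noncomputable def ΓOlist : List (Option M.Γ) :=
  (@Finset.univ (Option M.Γ) (@instFintypeOption M.Γ M.finΓ)).toList

/-- List of all states. -/
noncomputable def Qlist : List M.Q := (@Finset.univ M.Q M.finQ).toList

/-- List of all (state, character) pairs. -/
noncomputable def QΓlist : List (M.Q × M.Γ) :=
  (@Finset.univ (M.Q × M.Γ) (@instFintypeProd M.Q M.Γ M.finQ M.finΓ)).toList

/-- Move the head character of `lft` to `g` (or a blank if `lft` is empty). -/
noncomputable def moveLft (a' : M.Γ) : Term :=
  seqList [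
    .push (eΓ a') gR,
    .push (nΓ M) t2R,
    dispatch lftR eΓ (fun c => .push (eΓ c) t2R) (Γlist M),
    dispatch t2R (fun o => o.elim (nΓ M) eΓ)
      (fun o => o.elim (.push (blc M eΓ) gR)
        (fun c => .seq (.pop (eΓ c) lftR) (.push (eΓ c) gR))) (ΓOlist M)]

/-- The transition on state `q` scanning character `c`. -/
noncomputable def trans (q : M.Q) (c : M.Γ) : Term :=
  seqList [
    .pop (eΓ c) gR,
    .push (eQ (M.δ q c).1) qR,
    if (M.δ q c).2.2 then .push (eΓ (M.δ q c).2.1) lftR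
      else moveLft M eΓ (M.δ q c).2.1]

/-- One simulated step of the machine. -/
noncomputable def STEP : Term :=
  letI : DecidableEq M.Q := Classical.decEq _
  seqList [
    .push 0 tR,
    dispatch qR eQ
      (fun q => if q = M.qhalt then .skip
        else dispatch gR eΓ (fun c => .push (code M eΓ eQ q c) tR) (Γlist M)) (Qlist M),
    dispatch tR (fun p : M.Q × M.Γ => code M eΓ eQ p.1 p.2)
      (fun p => trans M eΓ eQ p.1 p.2) (QΓlist M)]

/-- The body of the final cleanup loop. -/
def cleanBody (i : ℕ) : Term :=
  if i = blc M eΓ then .ifeq fR 1 (.push (blc M eΓ) rgtR)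
  else .seq (.push 1 fR) (.push i rgtR)

/-- The full compiled program. -/
noncomputable def PROG (a b : ℕ) : Term :=
  seqList [
    .push (eQ M.q0) qR,
    iterSeq (POW rgtR pR b) a,
    .normal [pR] (.fort pR (.single (.push (blc M eΓ) gR))),
    .normal [rgtR] (.roft rgtR (mkBodies (fun i => .push i gR) (nΓ M))),
    .normal [rgtR] (.roft rgtR (mkBodies (fun i => .push i g2R) (nΓ M))),
    .normal [g2R] (.fort g2R (mkBodies (fun i => .pop i rgtR) (nΓ M))),
    .normal [pR] (.fort pR (.single (STEP M eΓ eQ))),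
    .normal [gR] (.roft gR (mkBodies (cleanBody M eΓ) (nΓ M)))]

end Compile
end ForNo
namespace ForNo

lemma get_mkBodiesAux (g : ℕ → Term) : ∀ (k s i : ℕ),
    (mkBodiesAux g s k).get i = g (s + min i k)
  | 0, s, i => by simp [mkBodiesAux, Bodies.get]
  | k+1, s, 0 => by simp [mkBodiesAux, Bodies.get]
  | k+1, s, i+1 => by
      show (mkBodiesAux g (s+1) k).get i = _
      rw [get_mkBodiesAux g k (s+1) i]
      congr 1
      omega

lemma get_mkBodies (g : ℕ → Term) (k i : ℕ) : (mkBodies g k).get i = g (min i k) := by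
  rw [mkBodies, get_mkBodiesAux, Nat.zero_add]

lemma not_writes_push {n : ℕ} {x y : Reg} (h : x ≠ y) : ¬ (Term.push n x).Writes y := h
lemma not_writes_pop {n : ℕ} {x y : Reg} (h : x ≠ y) : ¬ (Term.pop n x).Writes y := h

lemma mkBodiesAux_not_writes {g : ℕ → Term} {y : Reg} (h : ∀ j, ¬ (g j).Writes y) :
    ∀ (k s : ℕ), ¬ (mkBodiesAux g s k).Writes y
  | 0, s => h s
  | k+1, s => by
      show ¬ ((g s).Writes y ∨ _)
      push_neg
      exact ⟨h s, mkBodiesAux_not_writes h k (s+1)⟩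

lemma mkBodies_not_writes {g : ℕ → Term} {y : Reg} (h : ∀ j, ¬ (g j).Writes y) (k : ℕ) :
    ¬ (mkBodies g k).Writes y := mkBodiesAux_not_writes h k 0

lemma mkBodiesAux_not_leads {g : ℕ → Term} {y : Reg} (h : ∀ j, ¬ (g j).Leads y) :
    ∀ (k s : ℕ), ¬ (mkBodiesAux g s k).Leads y
  | 0, s => h s
  | k+1, s => by
      show ¬ ((g s).Leads y ∨ _)
      push_neg
      exact ⟨h s, mkBodiesAux_not_leads h k (s+1)⟩

lemma mkBodies_not_leads {g : ℕ → Term} {y : Reg} (h : ∀ j, ¬ (g j).Leads y) (k : ℕ) :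
    ¬ (mkBodies g k).Leads y := mkBodiesAux_not_leads h k 0

lemma mkBodiesAux_safe {g : ℕ → Term} (h : ∀ j, (g j).Safe) :
    ∀ (k s : ℕ), (mkBodiesAux g s k).Safe
  | 0, s => h s
  | k+1, s => ⟨h s, mkBodiesAux_safe h k (s+1)⟩

lemma mkBodies_safe {g : ℕ → Term} (h : ∀ j, (g j).Safe) (k : ℕ) :
    (mkBodies g k).Safe := mkBodiesAux_safe h k 0

lemma mkBodiesAux_wf {g : ℕ → Term} (h : ∀ j, (g j).WF) :
    ∀ (k s : ℕ), (mkBodiesAux g s k).WF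
  | 0, s => h s
  | k+1, s => ⟨h s, mkBodiesAux_wf h k (s+1)⟩

lemma mkBodies_wf {g : ℕ → Term} (h : ∀ j, (g j).WF) (k : ℕ) :
    (mkBodies g k).WF := mkBodiesAux_wf h k 0

lemma seqList_raw {l : List Term} (h : ∀ t ∈ l, t.Raw) : (seqList l).Raw := by
  induction l with
  | nil => trivial
  | cons t l ih => exact ⟨h t (by simp), ih (fun u hu => h u (by simp [hu]))⟩

lemma iterSeq_raw {t : Term} (h : t.Raw) : ∀ m, (iterSeq t m).Raw
  | 0 => trivial
  | 1 => h
  | m+2 => ⟨h, iterSeq_raw h (m+1)⟩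

lemma iterSeq_wf {t : Term} (h : t.WF) : ∀ m, (iterSeq t m).WF
  | 0 => trivial
  | 1 => h
  | m+2 => ⟨h, iterSeq_wf h (m+1)⟩

lemma powNest_safe (x p : Reg) : ∀ n, (powNest x p n).Safe
  | 0 => trivial
  | n+1 => powNest_safe x p n

lemma powNest_not_writes (x p : Reg) {y : Reg} (h : p ≠ y) :
    ∀ n, ¬ (powNest x p n).Writes y
  | 0 => h
  | n+1 => powNest_not_writes x p h n

lemma powNest_leads (x p : Reg) : ∀ n y, (powNest x p n).Leads y → x = y
  | 0, y, h => absurd h (by exact id)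
  | n+1, y, h => by
      rcases h with h | h
      · exact h
      · exact powNest_leads x p n y h

lemma powNest_wf (x p : Reg) (h : p ≠ x) : ∀ n, (powNest x p n).WF
  | 0 => trivial
  | n+1 => ⟨powNest_wf x p h n, powNest_not_writes x p h n⟩

section CompileWF

variable {S : Type} (M : TM S) (eΓ : M.Γ → ℕ) (eQ : M.Q → ℕ)

lemma moveLft_safe (a' : M.Γ) : (moveLft M eΓ a').Safe := by
  apply seqList_safe
  intro t ht
  simp only [moveLft, List.mem_cons, List.not_mem_nil, or_false] at ht
  rcases ht with rfl | rfl | rfl | rfl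
  · trivial
  · trivial
  · exact dispatch_safe (fun c _ => trivial)
  · refine dispatch_safe (fun o _ => ?_)
    cases o <;> trivial

lemma moveLft_not_writes (a' : M.Γ) (y : Reg)
    (h1 : gR ≠ y) (h2 : t2R ≠ y) (h3 : lftR ≠ y) : ¬ (moveLft M eΓ a').Writes y := by
  apply seqList_not_writes
  intro t ht
  simp only [moveLft, List.mem_cons, List.not_mem_nil, or_false] at ht
  rcases ht with rfl | rfl | rfl | rfl
  · exact h1
  · exact h2
  · exact dispatch_not_writes (fun c _ => h2)
  · refine dispatch_not_writes (fun o _ => ?_)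
    cases o with
    | none => exact h1
    | some c =>
      show ¬ (lftR = y ∨ gR = y)
      push_neg
      exact ⟨h3, h1⟩

lemma moveLft_not_leads (a' : M.Γ) (y : Reg) : ¬ (moveLft M eΓ a').Leads y := by
  apply seqList_not_leads
  intro t ht
  simp only [moveLft, List.mem_cons, List.not_mem_nil, or_false] at ht
  rcases ht with rfl | rfl | rfl | rfl
  · exact id
  · exact id
  · exact dispatch_not_leads (fun c _ => id)
  · refine dispatch_not_leads (fun o _ => ?_)
    cases o with
    | none => exact id
    | some c =>
      show ¬ (False ∨ False)
      simp

lemma moveLft_wf (a' : M.Γ) : (moveLft M eΓ a').WF := by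
  apply seqList_wf
  intro t ht
  simp only [moveLft, List.mem_cons, List.not_mem_nil, or_false] at ht
  rcases ht with rfl | rfl | rfl | rfl
  · trivial
  · trivial
  · exact dispatch_wf (fun c _ => trivial) (fun c _ => not_writes_push (by decide))
  · refine dispatch_wf (fun o _ => ?_) (fun o _ => ?_)
    · cases o with
      | none => trivial
      | some c => exact ⟨trivial, trivial⟩
    · cases o with
      | none => exact (by decide : ¬ (gR = t2R))
      | some c =>
        show ¬ (lftR = t2R ∨ gR = t2R)
        decide

lemma trans_safe (q : M.Q) (c : M.Γ) : (trans M eΓ eQ q c).Safe := by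
  apply seqList_safe
  intro t ht
  simp only [trans, List.mem_cons, List.not_mem_nil, or_false] at ht
  rcases ht with rfl | rfl | rfl
  · trivial
  · trivial
  · split
    · trivial
    · exact moveLft_safe M eΓ _

lemma trans_not_writes (q : M.Q) (c : M.Γ) (y : Reg)
    (h1 : gR ≠ y) (h2 : t2R ≠ y) (h3 : lftR ≠ y) (h4 : qR ≠ y) :
    ¬ (trans M eΓ eQ q c).Writes y := by
  apply seqList_not_writes
  intro t ht
  simp only [trans, List.mem_cons, List.not_mem_nil, or_false] at ht
  rcases ht with rfl | rfl | rfl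
  · exact h1
  · exact h4
  · split
    · exact h3
    · exact moveLft_not_writes M eΓ _ y h1 h2 h3

lemma trans_not_leads (q : M.Q) (c : M.Γ) (y : Reg) : ¬ (trans M eΓ eQ q c).Leads y := by
  apply seqList_not_leads
  intro t ht
  simp only [trans, List.mem_cons, List.not_mem_nil, or_false] at ht
  rcases ht with rfl | rfl | rfl
  · exact id
  · exact id
  · split
    · exact id
    · exact moveLft_not_leads M eΓ _ y

lemma trans_wf (q : M.Q) (c : M.Γ) : (trans M eΓ eQ q c).WF := by
  apply seqList_wf
  intro t ht
  simp only [trans, List.mem_cons, List.not_mem_nil, or_false] at ht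
  rcases ht with rfl | rfl | rfl
  · trivial
  · trivial
  · split
    · trivial
    · exact moveLft_wf M eΓ _

lemma STEP_safe : (STEP M eΓ eQ).Safe := by
  apply seqList_safe
  intro t ht
  simp only [STEP, List.mem_cons, List.not_mem_nil, or_false] at ht
  rcases ht with rfl | rfl | rfl
  · trivial
  · refine dispatch_safe (fun q _ => ?_)
    split
    · trivial
    · exact dispatch_safe (fun c _ => trivial)
  · exact dispatch_safe (fun p _ => trans_safe M eΓ eQ p.1 p.2)

lemma STEP_not_writes (y : Reg)
    (h1 : gR ≠ y) (h2 : t2R ≠ y) (h3 : lftR ≠ y) (h4 : qR ≠ y) (h5 : tR ≠ y) :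
    ¬ (STEP M eΓ eQ).Writes y := by
  apply seqList_not_writes
  intro t ht
  simp only [STEP, List.mem_cons, List.not_mem_nil, or_false] at ht
  rcases ht with rfl | rfl | rfl
  · exact h5
  · refine dispatch_not_writes (fun q _ => ?_)
    split
    · exact id
    · exact dispatch_not_writes (fun c _ => h5)
  · exact dispatch_not_writes (fun p _ => trans_not_writes M eΓ eQ p.1 p.2 y h1 h2 h3 h4)

lemma STEP_not_leads (y : Reg) : ¬ (STEP M eΓ eQ).Leads y := by
  apply seqList_not_leads
  intro t ht
  simp only [STEP, List.mem_cons, List.not_mem_nil, or_false] at ht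
  rcases ht with rfl | rfl | rfl
  · exact id
  · refine dispatch_not_leads (fun q _ => ?_)
    split
    · exact id
    · exact dispatch_not_leads (fun c _ => id)
  · exact dispatch_not_leads (fun p _ => trans_not_leads M eΓ eQ p.1 p.2 y)

lemma STEP_wf : (STEP M eΓ eQ).WF := by
  apply seqList_wf
  intro t ht
  simp only [STEP, List.mem_cons, List.not_mem_nil, or_false] at ht
  rcases ht with rfl | rfl | rfl
  · trivial
  · refine dispatch_wf (fun q _ => ?_) (fun q _ => ?_)
    · split
      · trivial
      · exact dispatch_wf (fun c _ => trivial) (fun c _ => not_writes_push (by decide))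
    · split
      · exact id
      · exact dispatch_not_writes (fun c _ => not_writes_push (by decide))
  · refine dispatch_wf (fun p _ => trans_wf M eΓ eQ p.1 p.2) (fun p _ => ?_)
    exact trans_not_writes M eΓ eQ p.1 p.2 tR (by decide) (by decide) (by decide) (by decide)

lemma cleanBody_safe (i : ℕ) : (cleanBody M eΓ i).Safe := by
  unfold cleanBody; split
  · trivial
  · exact ⟨trivial, trivial⟩

lemma cleanBody_wf (i : ℕ) : (cleanBody M eΓ i).WF := by
  unfold cleanBody; split
  · exact ⟨trivial, not_writes_push (by decide)⟩
  · exact ⟨trivial, trivial⟩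

lemma cleanBody_not_writes (i : ℕ) (y : Reg) (h1 : fR ≠ y) (h2 : rgtR ≠ y) :
    ¬ (cleanBody M eΓ i).Writes y := by
  unfold cleanBody; split
  · exact h2
  · show ¬ (fR = y ∨ rgtR = y)
    push_neg; exact ⟨h1, h2⟩

lemma cleanBody_not_leads (i : ℕ) (y : Reg) : ¬ (cleanBody M eΓ i).Leads y := by
  unfold cleanBody; split
  · exact id
  · show ¬ (False ∨ False)
    simp

lemma PROG_in_ForNo (a b : ℕ) : InForNo (PROG M eΓ eQ a b) := by
  constructor
  · apply seqList_raw
    intro t ht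
    simp only [PROG, List.mem_cons, List.not_mem_nil, or_false] at ht
    rcases ht with rfl | rfl | rfl | rfl | rfl | rfl | rfl | rfl
    · trivial
    · exact iterSeq_raw (t := POW rgtR pR b) (powNest_safe rgtR pR b) a
    · trivial
    · apply mkBodies_safe; intro j; trivial
    · apply mkBodies_safe; intro j; trivial
    · apply mkBodies_safe; intro j; trivial
    · exact STEP_safe M eΓ eQ
    · apply mkBodies_safe; intro j; exact cleanBody_safe M eΓ j
  · apply seqList_wf
    intro t ht
    simp only [PROG, List.mem_cons, List.not_mem_nil, or_false] at ht
    rcases ht with rfl | rfl | rfl | rfl | rfl | rfl | rfl | rfl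
    · trivial
    · refine iterSeq_wf (t := POW rgtR pR b) ?_ a
      exact ⟨powNest_wf rgtR pR (by decide) b,
        fun x hx => by
          simp only [List.mem_singleton] at hx
          subst hx
          exact powNest_not_writes rgtR pR (by decide) b,
        fun y hy => by
          have := powNest_leads rgtR pR b y hy
          simp [← this]⟩
    · exact ⟨⟨trivial, fun h => absurd h (by decide : ¬(gR = pR))⟩,
        fun x hx => by
          simp only [List.mem_singleton] at hx
          subst hx
          exact fun h => absurd h (by decide : ¬(gR = pR)),
        fun y hy => by
          rcases hy with rfl | hy
          · simp
          · exact absurd hy id⟩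
    · refine ⟨⟨?_, ?_⟩, ?_, ?_⟩
      · apply mkBodies_wf; intro j; trivial
      · apply mkBodies_not_writes; intro j; exact not_writes_push (by decide)
      · intro x hx
        simp only [List.mem_singleton] at hx
        subst hx
        apply mkBodies_not_writes; intro j; exact not_writes_push (by decide)
      · rintro y (rfl | hy)
        · simp
        · refine absurd hy ?_
          apply mkBodies_not_leads; intro j; exact id
    · refine ⟨⟨?_, ?_⟩, ?_, ?_⟩
      · apply mkBodies_wf; intro j; trivial
      · apply mkBodies_not_writes; intro j; exact not_writes_push (by decide)
      · intro x hx
        simp only [List.mem_singleton] at hx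
        subst hx
        apply mkBodies_not_writes; intro j; exact not_writes_push (by decide)
      · rintro y (rfl | hy)
        · simp
        · refine absurd hy ?_
          apply mkBodies_not_leads; intro j; exact id
    · refine ⟨⟨?_, ?_⟩, ?_, ?_⟩
      · apply mkBodies_wf; intro j; trivial
      · apply mkBodies_not_writes; intro j; exact not_writes_pop (by decide)
      · intro x hx
        simp only [List.mem_singleton] at hx
        subst hx
        apply mkBodies_not_writes; intro j; exact not_writes_pop (by decide)
      · rintro y (rfl | hy)
        · simp
        · refine absurd hy ?_
          apply mkBodies_not_leads; intro j; exact id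
    · refine ⟨⟨STEP_wf M eΓ eQ, ?_⟩, ?_, ?_⟩
      · exact STEP_not_writes M eΓ eQ pR (by decide) (by decide) (by decide) (by decide)
          (by decide)
      · intro x hx
        simp only [List.mem_singleton] at hx
        subst hx
        exact STEP_not_writes M eΓ eQ pR (by decide) (by decide) (by decide) (by decide)
          (by decide)
      · rintro y (rfl | hy)
        · simp
        · exact absurd hy (STEP_not_leads M eΓ eQ y)
    · refine ⟨⟨?_, ?_⟩, ?_, ?_⟩
      · apply mkBodies_wf; intro j; exact cleanBody_wf M eΓ j
      · apply mkBodies_not_writes; intro j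
        exact cleanBody_not_writes M eΓ j gR (by decide) (by decide)
      · intro x hx
        simp only [List.mem_singleton] at hx
        subst hx
        apply mkBodies_not_writes; intro j
        exact cleanBody_not_writes M eΓ j gR (by decide) (by decide)
      · rintro y (rfl | hy)
        · simp
        · refine absurd hy ?_
          apply mkBodies_not_leads; intro j; exact cleanBody_not_leads M eΓ j y

end CompileWF
end ForNo
namespace ForNo

lemma evalList_cons_inv {i : ℕ} {l : Stack} {ps : Bodies} {σ σ' : FState}
    (h : EvalList (i :: l) ps σ σ') :
    ∃ ω, Eval (ps.get i) σ ω ∧ EvalList l ps ω σ' := by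
  cases h with
  | cons h1 h2 => exact ⟨_, h1, h2⟩

lemma evalList_append {ps : Bodies} : ∀ {l1 l2 : Stack} {σ σ' σ'' : FState},
    EvalList l1 ps σ σ' → EvalList l2 ps σ' σ'' → EvalList (l1 ++ l2) ps σ σ'' := by
  intro l1
  induction l1 with
  | nil => intro l2 σ σ' σ'' h1 h2; cases h1; exact h2
  | cons i l ih =>
    intro l2 σ σ' σ'' h1 h2
    obtain ⟨ω, ha, hb⟩ := evalList_cons_inv h1
    exact .cons ha (ih hb h2)

lemma loop_push_const (m : ℕ) (x : Reg) : ∀ (l : Stack) (φ : Store),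
    ∃ φ' : Store, EvalList l (.single (.push m x)) (φ, 0) (φ', 0) ∧
      φ' x = List.replicate l.length m ++ φ x ∧ ∀ y ≠ x, φ' y = φ y := by
  intro l
  induction l with
  | nil => intro φ; exact ⟨φ, .nil _ _, by simp, fun y _ => rfl⟩
  | cons i l ih =>
    intro φ
    obtain ⟨φ', he, hx, ho⟩ := ih (upd φ x (m :: φ x))
    refine ⟨φ', .cons (eval_push0 m x φ) he, ?_, ?_⟩
    · rw [hx, upd_self, List.length_cons, List.replicate_succ', List.append_assoc]
      rfl
    · intro y hy
      rw [ho y hy, upd_ne _ _ hy]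

lemma loop_push_elem (x : Reg) (K : ℕ) : ∀ (l : Stack) (φ : Store), (∀ i ∈ l, i < K) →
    ∃ φ' : Store, EvalList l (mkBodies (fun i => .push i x) K) (φ, 0) (φ', 0) ∧
      φ' x = l.reverse ++ φ x ∧ ∀ y ≠ x, φ' y = φ y := by
  intro l
  induction l with
  | nil => intro φ _; exact ⟨φ, .nil _ _, by simp, fun y _ => rfl⟩
  | cons i l ih =>
    intro φ hlt
    obtain ⟨φ', he, hx, ho⟩ := ih (upd φ x (i :: φ x)) (fun j hj => hlt j (by simp [hj]))
    have hget : (mkBodies (fun i => Term.push i x) K).get i = .push i x := by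
      rw [get_mkBodies]
      have : min i K = i := by have := hlt i (by simp); omega
      rw [this]
    refine ⟨φ', ?_, ?_, ?_⟩
    · refine .cons ?_ he
      rw [hget]
      exact eval_push0 i x φ
    · rw [hx, upd_self, List.reverse_cons, List.append_assoc]
      rfl
    · intro y hy
      rw [ho y hy, upd_ne _ _ hy]

lemma loop_pop_elem (x : Reg) (K : ℕ) : ∀ (l : Stack) (φ : Store) (r : Stack),
    (∀ i ∈ l, i < K) → φ x = l ++ r →
    ∃ φ' : Store, EvalList l (mkBodies (fun i => .pop i x) K) (φ, 0) (φ', 0) ∧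
      φ' x = r ∧ ∀ y ≠ x, φ' y = φ y := by
  intro l
  induction l with
  | nil => intro φ r _ hr; exact ⟨φ, .nil _ _, by simpa using hr, fun y _ => rfl⟩
  | cons i l ih =>
    intro φ r hlt hr
    obtain ⟨φ', he, hx, ho⟩ := ih (upd φ x (l ++ r)) r (fun j hj => hlt j (by simp [hj]))
      (by rw [upd_self])
    have hget : (mkBodies (fun i => Term.pop i x) K).get i = .pop i x := by
      rw [get_mkBodies]
      have : min i K = i := by have := hlt i (by simp); omega
      rw [this]
    refine ⟨φ', ?_, hx, ?_⟩
    · refine .cons ?_ he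
      rw [hget]
      exact eval_pop0 (by rw [hr]; rfl)
    · intro y hy
      rw [ho y hy, upd_ne _ _ hy]

lemma powNest_eval (x p : Reg) (hxp : p ≠ x) : ∀ (n : ℕ) (φ : Store),
    ∃ φ' : Store, Eval (powNest x p n) (φ, 0) (φ', 0) ∧
      φ' p = List.replicate ((φ x).length ^ n) 1 ++ φ p ∧ ∀ y ≠ p, φ' y = φ y := by
  intro n
  induction n with
  | zero =>
    intro φ
    exact ⟨upd φ p (1 :: φ p), eval_push0 1 p φ, by simp, fun y hy => upd_ne _ _ hy⟩
  | succ n ih =>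
    intro φ
    have sub : ∀ (l : Stack) (φ0 : Store), φ0 x = φ x →
        ∃ φ' : Store, EvalList l (.single (powNest x p n)) (φ0, 0) (φ', 0) ∧
          φ' p = List.replicate (l.length * (φ x).length ^ n) 1 ++ φ0 p ∧
          ∀ y ≠ p, φ' y = φ0 y := by
      intro l
      induction l with
      | nil => intro φ0 _; exact ⟨φ0, .nil _ _, by simp, fun y _ => rfl⟩
      | cons i l ihl =>
        intro φ0 hx0
        obtain ⟨φ1, he1, hp1, ho1⟩ := ih φ0
        obtain ⟨φ', he, hp, ho⟩ := ihl φ1 (by rw [ho1 x (Ne.symm hxp), hx0])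
        refine ⟨φ', .cons he1 he, ?_, ?_⟩
        · rw [hp, hp1, hx0, List.length_cons, ← List.append_assoc, ← List.replicate_add]
          congr 2
          ring
        · intro y hy
          rw [ho y hy, ho1 y hy]
    obtain ⟨φ', he, hp, ho⟩ := sub (φ x) φ rfl
    refine ⟨φ', .fort he, ?_, ho⟩
    rw [hp]
    congr 2
    rw [pow_succ]
    ring

lemma POW_eval {x p : Reg} (hxp : p ≠ x) (b : ℕ) (φ : Store) :
    ∃ φ' : Store, Eval (POW x p b) (φ, 0) (φ', 0) ∧
      φ' p = List.replicate ((φ x).length ^ b) 1 ++ φ p ∧ ∀ y ≠ p, φ' y = φ y := by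
  obtain ⟨φ', he, hp, ho⟩ := powNest_eval x p hxp b φ
  exact ⟨φ', .normal he, hp, ho⟩

lemma iterPow_eval (b : ℕ) : ∀ (m : ℕ) (φ : Store),
    ∃ φ' : Store, Eval (iterSeq (POW rgtR pR b) m) (φ, 0) (φ', 0) ∧
      φ' pR = List.replicate (m * (φ rgtR).length ^ b) 1 ++ φ pR ∧
      ∀ y ≠ pR, φ' y = φ y
  | 0, φ => ⟨φ, .skip _, by simp, fun y _ => rfl⟩
  | 1, φ => by
      obtain ⟨φ', he, hp, ho⟩ := POW_eval (x := rgtR) (p := pR) (by decide) b φ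
      exact ⟨φ', he, by rw [hp]; simp, ho⟩
  | m+2, φ => by
      obtain ⟨φ1, he1, hp1, ho1⟩ := POW_eval (x := rgtR) (p := pR) (by decide) b φ
      obtain ⟨φ', he, hp, ho⟩ := iterPow_eval b (m+1) φ1
      refine ⟨φ', .seq he1 he, ?_, ?_⟩
      · rw [hp, hp1, ho1 rgtR (by decide), ← List.append_assoc, ← List.replicate_add]
        congr 2
        ring
      · intro y hy
        rw [ho y hy, ho1 y hy]

end ForNo
namespace ForNo
section StepEval

variable {S : Type} {M : TM S} {eΓ : M.Γ → ℕ} {eQ : M.Q → ℕ}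
variable (hΓinj : Function.Injective eΓ) (hΓlt : ∀ c, eΓ c < nΓ M)
variable (hQinj : Function.Injective eQ)

lemma nΓ_pos : 0 < nΓ M := @Fintype.card_pos M.Γ M.finΓ ⟨M.blank⟩

lemma Γlist_nodup : (Γlist M).Nodup := Finset.nodup_toList _
lemma Γlist_mem (c : M.Γ) : c ∈ Γlist M := by
  rw [Γlist, Finset.mem_toList]
  exact @Finset.mem_univ _ M.finΓ c
lemma Qlist_nodup : (Qlist M).Nodup := Finset.nodup_toList _
lemma Qlist_mem (q : M.Q) : q ∈ Qlist M := by
  rw [Qlist, Finset.mem_toList]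
  exact @Finset.mem_univ _ M.finQ q
lemma ΓOlist_nodup : (ΓOlist M).Nodup := Finset.nodup_toList _
lemma ΓOlist_mem (o : Option M.Γ) : o ∈ ΓOlist M := by
  rw [ΓOlist, Finset.mem_toList]
  exact @Finset.mem_univ _ (@instFintypeOption M.Γ M.finΓ) o
lemma QΓlist_nodup : (QΓlist M).Nodup := Finset.nodup_toList _
lemma QΓlist_mem (p : M.Q × M.Γ) : p ∈ QΓlist M := by
  rw [QΓlist, Finset.mem_toList]
  exact @Finset.mem_univ _ (@instFintypeProd M.Q M.Γ M.finQ M.finΓ) p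

include hΓlt hQinj hΓinj in
lemma code_inj {q q' : M.Q} {c c' : M.Γ}
    (h : code M eΓ eQ q c = code M eΓ eQ q' c') : q = q' ∧ c = c' := by
  rw [code, code] at h
  have h' : eQ q * nΓ M + eΓ c = eQ q' * nΓ M + eΓ c' := by omega
  have hn : 0 < nΓ M := nΓ_pos
  have hdiv : eQ q = eQ q' := by
    have d1 : (eQ q * nΓ M + eΓ c) / nΓ M = eQ q := by
      rw [Nat.mul_comm, Nat.mul_add_div hn, Nat.div_eq_of_lt (hΓlt c), Nat.add_zero]
    have d2 : (eQ q' * nΓ M + eΓ c') / nΓ M = eQ q' := by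
      rw [Nat.mul_comm, Nat.mul_add_div hn, Nat.div_eq_of_lt (hΓlt c'), Nat.add_zero]
    rw [← d1, ← d2, h']
  refine ⟨hQinj hdiv, hΓinj ?_⟩
  rw [hdiv] at h'
  omega

/-- The `stepFn` only depends on the head and tail of the right tape. -/
lemma stepFn_congr (u : List M.Γ) (q : M.Q) (v v' : List M.Γ)
    (h1 : v.headD M.blank = v'.headD M.blank) (h2 : v.tail = v'.tail) :
    M.stepFn (u, q, v) = M.stepFn (u, q, v') := by
  unfold TM.stepFn
  simp only [h1, h2]

include hΓinj hΓlt hQinj in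
lemma moveLft_eval (a₁ : M.Γ) (φ : Store) (u vt : List M.Γ) (s2 : Stack)
    (hl : φ lftR = u.map eΓ) (hg : φ gR = vt.map eΓ ++ s2) :
    ∃ φ' : Store, Eval (moveLft M eΓ a₁) (φ, 0) (φ', 0) ∧
      φ' lftR = u.tail.map eΓ ∧
      φ' gR = (u.headD M.blank :: a₁ :: vt).map eΓ ++ s2 ∧
      ∀ y, y ≠ lftR → y ≠ gR → y ≠ t2R → φ' y = φ y := by
  have hseq : moveLft M eΓ a₁ = .seq (.push (eΓ a₁) gR) (.seq (.push (nΓ M) t2R)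
      (.seq (dispatch lftR eΓ (fun c => .push (eΓ c) t2R) (Γlist M))
      (.seq (dispatch t2R (fun o => o.elim (nΓ M) eΓ)
        (fun o => o.elim (.push (blc M eΓ) gR)
          (fun c => .seq (.pop (eΓ c) lftR) (.push (eΓ c) gR))) (ΓOlist M)) .skip))) := rfl
  set φ5 := upd φ gR (eΓ a₁ :: φ gR) with hφ5
  set φ6 := upd φ5 t2R (nΓ M :: φ5 t2R) with hφ6
  have he1 : Eval (.push (eΓ a₁) gR) (φ, 0) (φ5, 0) := eval_push0 _ _ _
  have he2 : Eval (.push (nΓ M) t2R) (φ5, 0) (φ6, 0) := eval_push0 _ _ _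
  have h6l : φ6 lftR = u.map eΓ := by
    rw [hφ6, hφ5, upd_ne _ _ (by decide), upd_ne _ _ (by decide), hl]
  have h6g : φ6 gR = eΓ a₁ :: (vt.map eΓ ++ s2) := by
    rw [hφ6, upd_ne _ _ (by decide), hφ5, upd_self, hg]
  cases u with
  | nil =>
    -- lft is empty: push a blank onto g
    have he3 : Eval (dispatch lftR eΓ (fun c => .push (eΓ c) t2R) (Γlist M))
        (φ6, 0) (φ6, 0) := by
      apply dispatch_miss
      intro c _
      rw [h6l]
      simp
    set φ7 := upd φ6 gR (blc M eΓ :: φ6 gR) with hφ7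
    have he4 : Eval (dispatch t2R (fun o => o.elim (nΓ M) eΓ)
        (fun o => o.elim (.push (blc M eΓ) gR)
          (fun c => .seq (.pop (eΓ c) lftR) (.push (eΓ c) gR))) (ΓOlist M))
        (φ6, 0) (φ7, 0) := by
      apply dispatch_fire (x0 := (none : Option M.Γ)) (ΓOlist_nodup) (ΓOlist_mem _)
      · intro o _ ho
        cases o with
        | none => rfl
        | some c =>
          exfalso
          simp only [Option.elim] at ho
          exact absurd ho (Nat.ne_of_lt (hΓlt c))
      · rw [hφ6, upd_self]; rfl
      · intro o _
        cases o with
        | none => exact not_writes_push (by decide)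
        | some c =>
          show ¬ (lftR = t2R ∨ gR = t2R)
          decide
      · exact eval_push0 _ _ _
      · rfl
    refine ⟨φ7, ?_, ?_, ?_, ?_⟩
    · rw [hseq]
      exact .seq he1 (.seq he2 (.seq he3 (.seq he4 (.skip _))))
    · rw [hφ7, upd_ne _ _ (by decide), h6l]
      simp
    · rw [hφ7, upd_self, h6g]
      simp [blc]
    · intro y hy1 hy2 hy3
      rw [hφ7, upd_ne _ _ hy2, hφ6, upd_ne _ _ hy3, hφ5, upd_ne _ _ hy2]
  | cons b u1 =>
    set φ7 := upd φ6 t2R (eΓ b :: φ6 t2R) with hφ7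
    have he3 : Eval (dispatch lftR eΓ (fun c => .push (eΓ c) t2R) (Γlist M))
        (φ6, 0) (φ7, 0) := by
      apply dispatch_fire (x0 := b) (Γlist_nodup) (Γlist_mem _)
      · intro c _ hc
        exact hΓinj hc
      · rw [h6l]
        simp
      · intro c _
        exact not_writes_push (by decide)
      · exact eval_push0 _ _ _
      · rfl
    set φ8 := upd φ7 lftR (u1.map eΓ) with hφ8
    set φ9 := upd φ8 gR (eΓ b :: φ8 gR) with hφ9
    have he4 : Eval (dispatch t2R (fun o => o.elim (nΓ M) eΓ)
        (fun o => o.elim (.push (blc M eΓ) gR)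
          (fun c => .seq (.pop (eΓ c) lftR) (.push (eΓ c) gR))) (ΓOlist M))
        (φ7, 0) (φ9, 0) := by
      apply dispatch_fire (x0 := some b) (ΓOlist_nodup) (ΓOlist_mem _)
      · intro o _ ho
        cases o with
        | none =>
          exfalso
          simp only [Option.elim] at ho
          exact absurd ho.symm (Nat.ne_of_lt (hΓlt b))
        | some c =>
          simp only [Option.elim] at ho
          rw [hΓinj ho]
      · rw [hφ7, upd_self]; rfl
      · intro o _
        cases o with
        | none => exact not_writes_push (by decide)
        | some c =>
          show ¬ (lftR = t2R ∨ gR = t2R)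
          decide
      · show Eval (.seq (.pop (eΓ b) lftR) (.push (eΓ b) gR)) (φ7, 0) (φ9, 0)
        have hpop : Eval (.pop (eΓ b) lftR) (φ7, 0) (φ8, 0) :=
          eval_pop0 (by rw [hφ7, upd_ne _ _ (by decide), h6l, List.map_cons])
        exact .seq hpop (eval_push0 _ _ _)
      · rfl
    refine ⟨φ9, ?_, ?_, ?_, ?_⟩
    · rw [hseq]
      exact .seq he1 (.seq he2 (.seq he3 (.seq he4 (.skip _))))
    · rw [hφ9, upd_ne _ _ (by decide), hφ8, upd_self]
      simp
    · rw [hφ9, upd_self, hφ8, upd_ne _ _ (by decide), hφ7, upd_ne _ _ (by decide), h6g]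
      simp
    · intro y hy1 hy2 hy3
      rw [hφ9, upd_ne _ _ hy2, hφ8, upd_ne _ _ hy1, hφ7, upd_ne _ _ hy3, hφ6,
        upd_ne _ _ hy3, hφ5, upd_ne _ _ hy2]

include hΓinj hΓlt hQinj in
lemma trans_eval (q : M.Q) (a : M.Γ) (φ : Store) (u vt : List M.Γ) (s2 : Stack)
    (hl : φ lftR = u.map eΓ) (hg : φ gR = eΓ a :: (vt.map eΓ ++ s2))
    (hs2 : ∀ i ∈ s2, i = blc M eΓ) :
    ∃ (φ' : Store) (bs' : Stack), Eval (trans M eΓ eQ q a) (φ, 0) (φ', 0) ∧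
      φ' lftR = (M.stepFn (u, q, a :: vt)).1.map eΓ ∧
      (φ' qR).head? = some (eQ (M.stepFn (u, q, a :: vt)).2.1) ∧
      φ' gR = (M.stepFn (u, q, a :: vt)).2.2.map eΓ ++ bs' ∧
      (∀ i ∈ bs', i = blc M eΓ) ∧
      (φ' gR).length + 1 ≥ (φ gR).length ∧
      ∀ y, y ≠ lftR → y ≠ qR → y ≠ gR → y ≠ t2R → φ' y = φ y := by
  have hseq : trans M eΓ eQ q a = .seq (.pop (eΓ a) gR) (.seq (.push (eQ (M.δ q a).1) qR)
      (.seq (if (M.δ q a).2.2 then .push (eΓ (M.δ q a).2.1) lftR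
        else moveLft M eΓ (M.δ q a).2.1) .skip)) := rfl
  set φ3 := upd φ gR (vt.map eΓ ++ s2) with hφ3
  set φ4 := upd φ3 qR (eQ (M.δ q a).1 :: φ3 qR) with hφ4
  have he1 : Eval (.pop (eΓ a) gR) (φ, 0) (φ3, 0) := eval_pop0 hg
  have he2 : Eval (.push (eQ (M.δ q a).1) qR) (φ3, 0) (φ4, 0) := eval_push0 _ _ _
  have h4l : φ4 lftR = u.map eΓ := by
    rw [hφ4, upd_ne _ _ (by decide), hφ3, upd_ne _ _ (by decide), hl]
  have h4g : φ4 gR = vt.map eΓ ++ s2 := by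
    rw [hφ4, upd_ne _ _ (by decide), hφ3, upd_self]
  have h4q : φ4 qR = eQ (M.δ q a).1 :: φ3 qR := by rw [hφ4, upd_self]
  have hglen : (φ gR).length = (vt.map eΓ ++ s2).length + 1 := by rw [hg]; rfl
  have hbase : M.stepFn (u, q, a :: vt) = if (M.δ q a).2.2 then
      ((M.δ q a).2.1 :: u, (M.δ q a).1, vt)
    else (u.tail, (M.δ q a).1, M.trim (u.headD M.blank :: (M.δ q a).2.1 :: vt)) := rfl
  rcases hdir : (M.δ q a).2.2 with _ | _
  · -- left move
    obtain ⟨φ', hev, hl', hg', hfr⟩ :=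
      moveLft_eval hΓinj hΓlt hQinj (M.δ q a).2.1 φ4 u vt s2 h4l h4g
    obtain ⟨sb, hsb, hsbbl⟩ := M.trim_decomp (u.headD M.blank :: (M.δ q a).2.1 :: vt)
    refine ⟨φ', sb.map eΓ ++ s2, ?_, ?_, ?_, ?_, ?_, ?_, ?_⟩
    · rw [hseq]
      refine .seq he1 (.seq he2 (.seq ?_ (.skip _)))
      rw [hdir]
      exact hev
    · rw [hl', hbase]
      simp [hdir]
    · rw [hfr qR (by decide) (by decide) (by decide), h4q, hbase]
      simp [hdir]
    · rw [hg', hbase]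
      simp only [hdir, Bool.false_eq_true, if_false]
      show _ = (M.trim (u.headD M.blank :: (M.δ q a).2.1 :: vt)).map eΓ ++ (sb.map eΓ ++ s2)
      rw [← List.append_assoc, ← List.map_append, ← hsb]
    · intro i hi
      rcases List.mem_append.mp hi with hi | hi
      · obtain ⟨x, hx1, rfl⟩ := List.mem_map.mp hi
        rw [hsbbl x hx1]
        rfl
      · exact hs2 i hi
    · rw [hg', hglen]
      simp
    · intro y hy1 hy2 hy3 hy4
      rw [hfr y hy1 hy3 hy4, hφ4, upd_ne _ _ hy2, hφ3, upd_ne _ _ hy3]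
  · -- right move
    set φ5 := upd φ4 lftR (eΓ (M.δ q a).2.1 :: φ4 lftR) with hφ5
    refine ⟨φ5, s2, ?_, ?_, ?_, ?_, hs2, ?_, ?_⟩
    · rw [hseq]
      refine .seq he1 (.seq he2 (.seq ?_ (.skip _)))
      rw [hdir]
      exact eval_push0 _ _ _
    · rw [hφ5, upd_self, h4l, hbase]
      simp [hdir]
    · rw [hφ5, upd_ne _ _ (by decide), h4q, hbase]
      simp [hdir]
    · rw [hφ5, upd_ne _ _ (by decide), h4g, hbase]
      simp [hdir]
    · rw [hφ5, upd_ne _ _ (by decide), h4g, hglen]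
    · intro y hy1 hy2 hy3 hy4
      rw [hφ5, upd_ne _ _ hy1, hφ4, upd_ne _ _ hy2, hφ3, upd_ne _ _ hy3]

end StepEval
end ForNo
namespace ForNo
section StepEval2

variable {S : Type} {M : TM S} {eΓ : M.Γ → ℕ} {eQ : M.Q → ℕ}
variable (hΓinj : Function.Injective eΓ) (hΓlt : ∀ c, eΓ c < nΓ M)
variable (hQinj : Function.Injective eQ)

include hQinj in
lemma step_halt (φ : Store) (hq : (φ qR).head? = some (eQ M.qhalt)) :
    Eval (STEP M eΓ eQ) (φ, 0) (upd φ tR (0 :: φ tR), 0) := by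
  letI : DecidableEq M.Q := Classical.decEq M.Q
  have hseq : STEP M eΓ eQ = .seq (.push 0 tR) (.seq
      (dispatch qR eQ
        (fun q => if q = M.qhalt then .skip
          else dispatch gR eΓ (fun c => .push (code M eΓ eQ q c) tR) (Γlist M)) (Qlist M))
      (.seq (dispatch tR (fun p : M.Q × M.Γ => code M eΓ eQ p.1 p.2)
        (fun p => trans M eΓ eQ p.1 p.2) (QΓlist M)) .skip)) := rfl
  set φ1 := upd φ tR (0 :: φ tR) with hφ1
  have he0 : Eval (.push 0 tR) (φ, 0) (φ1, 0) := eval_push0 _ _ _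
  have he1 : Eval (dispatch qR eQ
      (fun q => if q = M.qhalt then .skip
        else dispatch gR eΓ (fun c => .push (code M eΓ eQ q c) tR) (Γlist M)) (Qlist M))
      (φ1, 0) (φ1, 0) := by
    apply dispatch_fire (x0 := M.qhalt) Qlist_nodup (Qlist_mem _)
    · intro q _ hc
      exact hQinj hc
    · rw [hφ1, upd_ne _ _ (by decide), hq]
    · intro q _
      split
      · exact id
      · exact dispatch_not_writes (fun c _ => not_writes_push (by decide))
    · rw [if_pos rfl]
      exact .skip _
    · rfl
  have he2 : Eval (dispatch tR (fun p : M.Q × M.Γ => code M eΓ eQ p.1 p.2)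
      (fun p => trans M eΓ eQ p.1 p.2) (QΓlist M)) (φ1, 0) (φ1, 0) := by
    apply dispatch_miss
    intro p _
    rw [hφ1, upd_self]
    simp [code]
  rw [hseq]
  exact .seq he0 (.seq he1 (.seq he2 (.skip _)))

include hΓinj hΓlt hQinj in
lemma step_go (φ : Store) (u : List M.Γ) (q : M.Q) (v : List M.Γ) (bs : Stack)
    (hq : (φ qR).head? = some (eQ q)) (hqh : q ≠ M.qhalt)
    (hl : φ lftR = u.map eΓ) (hg : φ gR = v.map eΓ ++ bs)
    (hbs : ∀ i ∈ bs, i = blc M eΓ) (hne : φ gR ≠ []) :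
    ∃ (φ' : Store) (bs' : Stack), Eval (STEP M eΓ eQ) (φ, 0) (φ', 0) ∧
      φ' lftR = (M.stepFn (u, q, v)).1.map eΓ ∧
      (φ' qR).head? = some (eQ (M.stepFn (u, q, v)).2.1) ∧
      φ' gR = (M.stepFn (u, q, v)).2.2.map eΓ ++ bs' ∧
      (∀ i ∈ bs', i = blc M eΓ) ∧
      (φ' gR).length + 1 ≥ (φ gR).length ∧
      ∀ y, y ≠ lftR → y ≠ qR → y ≠ gR → y ≠ tR → y ≠ t2R → φ' y = φ y := by
  letI : DecidableEq M.Q := Classical.decEq M.Q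
  have hseq : STEP M eΓ eQ = .seq (.push 0 tR) (.seq
      (dispatch qR eQ
        (fun q => if q = M.qhalt then .skip
          else dispatch gR eΓ (fun c => .push (code M eΓ eQ q c) tR) (Γlist M)) (Qlist M))
      (.seq (dispatch tR (fun p : M.Q × M.Γ => code M eΓ eQ p.1 p.2)
        (fun p => trans M eΓ eQ p.1 p.2) (QΓlist M)) .skip)) := rfl
  set a := v.headD M.blank with ha
  obtain ⟨s2, hs2, hsplit⟩ : ∃ s2, (∀ i ∈ s2, i = blc M eΓ) ∧
      φ gR = eΓ a :: (v.tail.map eΓ ++ s2) := by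
    cases v with
    | nil =>
      rw [hg] at hne ⊢
      simp only [List.map_nil, List.nil_append] at hne ⊢
      cases bs with
      | nil => exact absurd rfl hne
      | cons i bs1 =>
        refine ⟨bs1, fun j hj => hbs j (by simp [hj]), ?_⟩
        rw [hbs i (by simp)]
        rfl
    | cons a0 v1 =>
      refine ⟨bs, hbs, ?_⟩
      rw [hg]
      rfl
  set φ1 := upd φ tR (0 :: φ tR) with hφ1
  have he0 : Eval (.push 0 tR) (φ, 0) (φ1, 0) := eval_push0 _ _ _
  set φ2 := upd φ1 tR (code M eΓ eQ q a :: φ1 tR) with hφ2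
  have he1 : Eval (dispatch qR eQ
      (fun q => if q = M.qhalt then .skip
        else dispatch gR eΓ (fun c => .push (code M eΓ eQ q c) tR) (Γlist M)) (Qlist M))
      (φ1, 0) (φ2, 0) := by
    apply dispatch_fire (x0 := q) Qlist_nodup (Qlist_mem _)
    · intro q' _ hc
      exact hQinj hc
    · rw [hφ1, upd_ne _ _ (by decide), hq]
    · intro q' _
      split
      · exact id
      · exact dispatch_not_writes (fun c _ => not_writes_push (by decide))
    · rw [if_neg hqh]
      apply dispatch_fire (x0 := a) Γlist_nodup (Γlist_mem _)
      · intro c _ hc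
        exact hΓinj hc
      · rw [hφ1, upd_ne _ _ (by decide), hsplit]; rfl
      · intro c _
        exact not_writes_push (by decide)
      · exact eval_push0 _ _ _
      · rfl
    · rfl
  have h2l : φ2 lftR = u.map eΓ := by
    rw [hφ2, upd_ne _ _ (by decide), hφ1, upd_ne _ _ (by decide), hl]
  have h2g : φ2 gR = eΓ a :: (v.tail.map eΓ ++ s2) := by
    rw [hφ2, upd_ne _ _ (by decide), hφ1, upd_ne _ _ (by decide), hsplit]
  obtain ⟨φ', bs', hev, hl', hq', hg', hbs', hlen', hfr'⟩ :=
    trans_eval hΓinj hΓlt hQinj q a φ2 u v.tail s2 h2l h2g hs2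
  have he2 : Eval (dispatch tR (fun p : M.Q × M.Γ => code M eΓ eQ p.1 p.2)
      (fun p => trans M eΓ eQ p.1 p.2) (QΓlist M)) (φ2, 0) (φ', 0) := by
    apply dispatch_fire (x0 := (q, a)) QΓlist_nodup (QΓlist_mem _)
    · intro p _ hc
      obtain ⟨h1, h2⟩ := code_inj hΓinj hΓlt hQinj hc
      exact Prod.ext h1 h2
    · rw [hφ2, upd_self]; rfl
    · intro p _
      exact trans_not_writes M eΓ eQ p.1 p.2 tR (by decide) (by decide) (by decide) (by decide)
    · exact hev
    · rfl
  have hcong : M.stepFn (u, q, a :: v.tail) = M.stepFn (u, q, v) := by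
    apply stepFn_congr
    · cases v <;> rfl
    · cases v <;> rfl
  rw [hcong] at hl' hq' hg'
  refine ⟨φ', bs', ?_, hl', hq', hg', hbs', ?_, ?_⟩
  · rw [hseq]
    exact .seq he0 (.seq he1 (.seq he2 (.skip _)))
  · have h2len : (φ2 gR).length = (φ gR).length := by
      rw [h2g, hsplit]
    omega
  · intro y hy1 hy2 hy3 hy4 hy5
    rw [hfr' y hy1 hy2 hy3 hy5, hφ2, upd_ne _ _ hy4, hφ1, upd_ne _ _ hy4]

end StepEval2
end ForNo
namespace ForNo
section CleanSim

variable {S : Type} {M : TM S} {eΓ : M.Γ → ℕ} {eQ : M.Q → ℕ}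
variable (hΓinj : Function.Injective eΓ) (hΓlt : ∀ c, eΓ c < nΓ M)
variable (hQinj : Function.Injective eQ)

include hΓlt in
lemma clean_blanks : ∀ (l : Stack) (φ : Store), (∀ i ∈ l, i = blc M eΓ) → φ fR = [] →
    EvalList l (mkBodies (cleanBody M eΓ) (nΓ M)) (φ, 0) (φ, 0) := by
  intro l
  induction l with
  | nil => intro φ _ _; exact .nil _ _
  | cons i l ih =>
    intro φ hbl hf
    have hi : i = blc M eΓ := hbl i (by simp)
    have hget : (mkBodies (cleanBody M eΓ) (nΓ M)).get i =
        .ifeq fR 1 (.push (blc M eΓ) rgtR) := by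
      rw [get_mkBodies]
      have : min i (nΓ M) = i := by have := hΓlt M.blank; rw [hi]; simp [blc]; omega
      rw [this, hi, cleanBody, if_pos rfl]
    refine .cons ?_ (ih φ (fun j hj => hbl j (by simp [hj])) hf)
    rw [hget]
    exact Eval.ifeq_false φ 0 (by rw [hf]; simp)

include hΓlt in
lemma clean_push : ∀ (l : Stack) (φ : Store), (∀ i ∈ l, i < nΓ M) →
    (φ fR).head? = some 1 →
    ∃ φ' : Store, EvalList l (mkBodies (cleanBody M eΓ) (nΓ M)) (φ, 0) (φ', 0) ∧
      φ' rgtR = l.reverse ++ φ rgtR ∧ (∀ y, y ≠ rgtR → y ≠ fR → φ' y = φ y) ∧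
      (φ' fR).head? = some 1 := by
  intro l
  induction l with
  | nil => intro φ _ hf; exact ⟨φ, .nil _ _, by simp, fun y _ _ => rfl, hf⟩
  | cons i l ih =>
    intro φ hlt hf
    have hmin : min i (nΓ M) = i := by have := hlt i (by simp); omega
    by_cases hi : i = blc M eΓ
    · set φ1 := upd φ rgtR (i :: φ rgtR) with hφ1
      obtain ⟨φ', he, hr, ho, hf'⟩ := ih φ1 (fun j hj => hlt j (by simp [hj]))
        (by rw [hφ1, upd_ne _ _ (by decide), hf])
      refine ⟨φ', ?_, ?_, ?_, hf'⟩
      · refine .cons ?_ he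
        rw [get_mkBodies, hmin, cleanBody, if_pos hi]
        refine Eval.ifeq_true hf ?_
        subst hi
        rw [hφ1]
        exact eval_push0 _ _ _
      · rw [hr, hφ1, upd_self, List.reverse_cons, List.append_assoc]
        rfl
      · intro y hy1 hy2
        rw [ho y hy1 hy2, hφ1, upd_ne _ _ hy1]
    · set φ1 := upd φ fR (1 :: φ fR) with hφ1
      set φ2 := upd φ1 rgtR (i :: φ1 rgtR) with hφ2
      obtain ⟨φ', he, hr, ho, hf'⟩ := ih φ2 (fun j hj => hlt j (by simp [hj]))
        (by rw [hφ2, upd_ne _ _ (by decide), hφ1, upd_self]; rfl)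
      refine ⟨φ', ?_, ?_, ?_, hf'⟩
      · refine .cons ?_ he
        rw [get_mkBodies, hmin, cleanBody, if_neg hi]
        exact .seq (eval_push0 _ _ _) (eval_push0 _ _ _)
      · rw [hr, hφ2, upd_self, hφ1, upd_ne _ _ (by decide), List.reverse_cons,
          List.append_assoc]
        rfl
      · intro y hy1 hy2
        rw [ho y hy1 hy2, hφ2, upd_ne _ _ hy1, hφ1, upd_ne _ _ hy2]

include hΓlt in
lemma clean_main (l : Stack) (φ : Store) (hlt : ∀ i ∈ l, i < nΓ M)
    (hhd : l.head? ≠ some (blc M eΓ)) (hf : φ fR = []) :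
    ∃ φ' : Store, EvalList l (mkBodies (cleanBody M eΓ) (nΓ M)) (φ, 0) (φ', 0) ∧
      φ' rgtR = l.reverse ++ φ rgtR ∧ ∀ y, y ≠ rgtR → y ≠ fR → φ' y = φ y := by
  cases l with
  | nil => exact ⟨φ, .nil _ _, by simp, fun y _ _ => rfl⟩
  | cons i l =>
    have hi : i ≠ blc M eΓ := by
      intro h
      subst h
      exact hhd rfl
    have hmin : min i (nΓ M) = i := by have := hlt i (by simp); omega
    set φ1 := upd φ fR (1 :: φ fR) with hφ1
    set φ2 := upd φ1 rgtR (i :: φ1 rgtR) with hφ2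
    obtain ⟨φ', he, hr, ho, _⟩ := clean_push hΓlt l φ2 (fun j hj => hlt j (by simp [hj]))
      (by rw [hφ2, upd_ne _ _ (by decide), hφ1, upd_self]; rfl)
    refine ⟨φ', ?_, ?_, ?_⟩
    · refine .cons ?_ he
      rw [get_mkBodies, hmin, cleanBody, if_neg hi]
      exact .seq (eval_push0 _ _ _) (eval_push0 _ _ _)
    · rw [hr, hφ2, upd_self, hφ1, upd_ne _ _ (by decide), List.reverse_cons,
        List.append_assoc]
      rfl
    · intro y hy1 hy2
      rw [ho y hy1 hy2, hφ2, upd_ne _ _ hy1, hφ1, upd_ne _ _ hy2]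

include hΓinj hΓlt in
lemma clean_eval (φ : Store) (v : List M.Γ) (bs : Stack)
    (hg : φ gR = v.map eΓ ++ bs) (hbs : ∀ i ∈ bs, i = blc M eΓ)
    (hv : M.NoTB v) (hf : φ fR = []) (hrgt : φ rgtR = []) :
    ∃ φ' : Store,
      Eval (.normal [gR] (.roft gR (mkBodies (cleanBody M eΓ) (nΓ M)))) (φ, 0) (φ', 0) ∧
      φ' rgtR = v.map eΓ ∧ ∀ y, y ≠ rgtR → y ≠ fR → φ' y = φ y := by
  have hrev : (φ gR).reverse = bs.reverse ++ (v.map eΓ).reverse := by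
    rw [hg, List.reverse_append]
  have h1 : EvalList bs.reverse (mkBodies (cleanBody M eΓ) (nΓ M)) (φ, 0) (φ, 0) :=
    clean_blanks hΓlt bs.reverse φ (fun i hi => hbs i (List.mem_reverse.mp hi)) hf
  obtain ⟨φ', he, hr, ho⟩ := clean_main hΓlt ((v.map eΓ).reverse) φ
    (fun i hi => by
      obtain ⟨x, _, rfl⟩ := List.mem_map.mp (List.mem_reverse.mp hi)
      exact hΓlt x)
    (by
      rw [← List.map_reverse]
      cases hv' : v.reverse with
      | nil => simp
      | cons x xs =>
        simp only [List.map_cons, List.head?_cons, ne_eq, Option.some.injEq]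
        intro hx
        have hxlast : v.getLast? = some x := by
          rw [← List.head?_reverse, hv']
          rfl
        exact hv x hxlast (hΓinj hx))
    hf
  refine ⟨φ', ?_, ?_, ho⟩
  · refine .normal (.roft ?_)
    show EvalList (φ gR).reverse _ _ _
    rw [hrev]
    exact evalList_append h1 he
  · rw [hr, List.reverse_reverse, hrgt, List.append_nil]

include hΓinj hΓlt hQinj in
lemma sim_loop (k N : ℕ) (hkN : k ≤ N) (cfg : ℕ → M.Config)
    (hcfg1 : ∀ j, j < k → (cfg j).2.1 ≠ M.qhalt ∧ cfg (j + 1) = M.stepFn (cfg j))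
    (hcfg2 : ∀ j, k ≤ j → cfg j = cfg k)
    (hhalt : (cfg k).2.1 = M.qhalt) :
    ∀ (l : Stack) (j : ℕ) (φ : Store), (∀ i ∈ l, i = (1 : ℕ)) → j + l.length = N →
    φ lftR = (cfg j).1.map eΓ → (φ qR).head? = some (eQ (cfg j).2.1) →
    (∃ bs, (∀ i ∈ bs, i = blc M eΓ) ∧ φ gR = (cfg j).2.2.map eΓ ++ bs) →
    N ≤ (φ gR).length + j →
    φ rgtR = [] → φ fR = [] →
    ∃ φ' : Store, EvalList l (.single (STEP M eΓ eQ)) (φ, 0) (φ', 0) ∧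
      φ' lftR = (cfg N).1.map eΓ ∧ (φ' qR).head? = some (eQ (cfg N).2.1) ∧
      (∃ bs, (∀ i ∈ bs, i = blc M eΓ) ∧ φ' gR = (cfg N).2.2.map eΓ ++ bs) ∧
      φ' rgtR = [] ∧ φ' fR = [] := by
  intro l
  induction l with
  | nil =>
    intro j φ _ hlen hl hq hbs _ hrgt hf
    have : j = N := by simpa using hlen
    subst this
    exact ⟨φ, .nil _ _, hl, hq, hbs, hrgt, hf⟩
  | cons i l ih =>
    intro j φ h1 hlen hl hq hbs hglen hrgt hf
    obtain ⟨bs, hbsbl, hg⟩ := hbs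
    have hi : i = 1 := h1 i (by simp)
    rcases Nat.lt_or_ge j k with hj | hj
    · -- active step
      obtain ⟨hqh, hsucc⟩ := hcfg1 j hj
      have hne : φ gR ≠ [] := by
        intro h
        rw [h] at hglen
        simp at hglen
        omega
      obtain ⟨φ', bs', hev, hl', hq', hg', hbs', hlen', hfr'⟩ :=
        step_go hΓinj hΓlt hQinj φ (cfg j).1 (cfg j).2.1 (cfg j).2.2 bs hq hqh hl hg hbsbl hne
      rw [show ((cfg j).1, (cfg j).2.1, (cfg j).2.2) = cfg j from rfl, ← hsucc] at hl' hq' hg'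
      obtain ⟨φ'', he'', hout⟩ := ih (j + 1) φ'
        (fun x hx => h1 x (by simp [hx]))
        (by simp at hlen ⊢; omega)
        hl' hq' ⟨bs', hbs', hg'⟩
        (by omega)
        (by rw [hfr' rgtR (by decide) (by decide) (by decide) (by decide) (by decide), hrgt])
        (by rw [hfr' fR (by decide) (by decide) (by decide) (by decide) (by decide), hf])
      refine ⟨φ'', .cons ?_ he'', hout⟩
      show Eval ((Bodies.single (STEP M eΓ eQ)).get i) _ _
      exact hev
    · -- halted
      have hqj : (cfg j).2.1 = M.qhalt := by rw [hcfg2 j hj, hhalt]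
      have hev : Eval (STEP M eΓ eQ) (φ, 0) (upd φ tR (0 :: φ tR), 0) :=
        step_halt hQinj φ (by rw [hq, hqj])
      have hcfgj1 : cfg (j + 1) = cfg j := by rw [hcfg2 (j+1) (by omega), hcfg2 j hj]
      obtain ⟨φ'', he'', hout⟩ := ih (j + 1) (upd φ tR (0 :: φ tR))
        (fun x hx => h1 x (by simp [hx]))
        (by simp at hlen ⊢; omega)
        (by rw [upd_ne _ _ (by decide), hcfgj1, hl])
        (by rw [upd_ne _ _ (by decide), hcfgj1, hq])
        ⟨bs, hbsbl, by rw [upd_ne _ _ (by decide), hcfgj1, hg]⟩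
        (by rw [upd_ne _ _ (by decide)]; omega)
        (by rw [upd_ne _ _ (by decide), hrgt])
        (by rw [upd_ne _ _ (by decide), hf])
      exact ⟨φ'', .cons hev he'', hout⟩

end CleanSim
end ForNo


open ForNo in
/-- Correctness of the compiler: for every PTIME TM `M` with the
simulation-setup encodings there is a ForNo term `T` such that, whenever `M`
started on input `w` reaches a halting configuration `chalt`, `T` started with
`⟨⟨w⟩⟩` in register `rgt` evaluates to a state cleanly simulating `chalt`. -/
theorem compiler_correct {S : Type} [Fintype S] (M : TM S) (hM : M.PTime)
    (encΓ : M.Γ → ℕ) (encQ : M.Q → ℕ) (hsetup : SimSetup M encΓ encQ) :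
    ∃ T : Term, InForNo T ∧
      ∀ (w : List S) (chalt : M.Config) (k : ℕ),
        M.Steps k (M.init w) chalt → chalt.2.1 = M.qhalt →
        ∃ τ : FState,
          Eval T (upd emptyStore rgtR ((w.map M.embed).map encΓ), 0) τ ∧
          SimClean M encΓ encQ τ chalt := by
  obtain ⟨hΓinj, hΓlt, -, hQinj⟩ := hsetup
  obtain ⟨A, B, hA, hB, hPT⟩ := hM
  refine ⟨PROG M encΓ encQ A B, PROG_in_ForNo M encΓ encQ A B, ?_⟩
  intro w chalt k hsteps hhalt
  -- the number of steps is bounded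
  obtain ⟨k0, hk0le, c0, hsteps0, hhalt0⟩ := hPT w
  obtain ⟨hkk0, -⟩ := M.steps_halt_unique k k0 _ _ _ hsteps hsteps0 hhalt hhalt0
  set N := A * w.length ^ B with hN
  have hkN : k ≤ N := by rw [hkk0]; exact hk0le
  obtain ⟨hchalt_eq, hnostop⟩ := M.steps_iterate k _ _ hsteps
  set cfg : ℕ → M.Config := fun j => M.stepFn^[min j k] (M.init w) with hcfg
  have hcfg1 : ∀ j, j < k → (cfg j).2.1 ≠ M.qhalt ∧ cfg (j + 1) = M.stepFn (cfg j) := by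
    intro j hj
    have hm1 : min j k = j := by omega
    have hm2 : min (j + 1) k = j + 1 := by omega
    constructor
    · rw [hcfg]
      simp only [hm1]
      exact hnostop j hj
    · rw [hcfg]
      simp only [hm1, hm2]
      rw [Function.iterate_succ_apply']
  have hcfg2 : ∀ j, k ≤ j → cfg j = cfg k := by
    intro j hj
    rw [hcfg]
    simp only [min_eq_right hj, min_self]
  have hcN : cfg N = chalt := by
    rw [hcfg]
    simp only [min_eq_right hkN]
    exact hchalt_eq.symm
  have hhalt' : (cfg k).2.1 = M.qhalt := by
    rw [show cfg k = chalt by rw [← hcN, hcfg2 N hkN]]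
    exact hhalt
  -- evaluate the program phase by phase
  set enc := (w.map M.embed).map encΓ with henc
  set φ0 := upd emptyStore rgtR enc with hφ0
  have h0 : ∀ y, y ≠ rgtR → φ0 y = [] := by
    intro y hy
    rw [hφ0, upd_ne _ _ hy]
    rfl
  have h0r : φ0 rgtR = enc := by rw [hφ0, upd_self]
  have hencmem : ∀ i ∈ enc, i < nΓ M := by
    intro i hi
    obtain ⟨x, _, rfl⟩ := List.mem_map.mp hi
    exact hΓlt x
  have henclen : enc.length = w.length := by simp [henc]
  -- phase 1
  set φ1 := upd φ0 qR (encQ M.q0 :: φ0 qR) with hφ1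
  have he1 : Eval (.push (encQ M.q0) qR) (φ0, 0) (φ1, 0) := eval_push0 _ _ _
  have h1q : φ1 qR = [encQ M.q0] := by rw [hφ1, upd_self, h0 qR (by decide)]
  have h1 : ∀ y, y ≠ rgtR → y ≠ qR → φ1 y = [] := by
    intro y hy1 hy2
    rw [hφ1, upd_ne _ _ hy2, h0 y hy1]
  have h1r : φ1 rgtR = enc := by rw [hφ1, upd_ne _ _ (by decide), h0r]
  -- phase 2
  obtain ⟨φ2, he2, hp2, ho2⟩ := iterPow_eval B A φ1
  have h2p : φ2 pR = List.replicate N 1 := by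
    rw [hp2, h1r, henclen, h1 pR (by decide) (by decide), List.append_nil, hN]
  -- phase 3
  obtain ⟨φ3, hel3, hg3, ho3⟩ := loop_push_const (blc M encΓ) gR (φ2 pR) φ2
  have he3 : Eval (.normal [pR] (.fort pR (.single (.push (blc M encΓ) gR))))
      (φ2, 0) (φ3, 0) := .normal (.fort hel3)
  have h3g : φ3 gR = List.replicate N (blc M encΓ) := by
    rw [hg3, h2p, List.length_replicate, ho2 gR (by decide), h1 gR (by decide) (by decide),
      List.append_nil]
  have h3r : φ3 rgtR = enc := by
    rw [ho3 rgtR (by decide), ho2 rgtR (by decide), h1r]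
  -- phase 4
  obtain ⟨φ4, hel4, hg4, ho4⟩ := loop_push_elem gR (nΓ M) (φ3 rgtR).reverse φ3
    (fun i hi => hencmem i (by rw [← h3r]; exact List.mem_reverse.mp hi))
  have he4 : Eval (.normal [rgtR] (.roft rgtR (mkBodies (fun i => .push i gR) (nΓ M))))
      (φ3, 0) (φ4, 0) := .normal (.roft hel4)
  have h4g : φ4 gR = enc ++ List.replicate N (blc M encΓ) := by
    rw [hg4, List.reverse_reverse, h3r, h3g]
  have h4r : φ4 rgtR = enc := by rw [ho4 rgtR (by decide), h3r]
  -- phase 5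
  obtain ⟨φ5, hel5, hg5, ho5⟩ := loop_push_elem g2R (nΓ M) (φ4 rgtR).reverse φ4
    (fun i hi => hencmem i (by rw [← h4r]; exact List.mem_reverse.mp hi))
  have he5 : Eval (.normal [rgtR] (.roft rgtR (mkBodies (fun i => .push i g2R) (nΓ M))))
      (φ4, 0) (φ5, 0) := .normal (.roft hel5)
  have h5g2 : φ5 g2R = enc := by
    rw [hg5, List.reverse_reverse, h4r, ho4 g2R (by decide), ho3 g2R (by decide),
      ho2 g2R (by decide), h1 g2R (by decide) (by decide), List.append_nil]
  have h5r : φ5 rgtR = enc := by rw [ho5 rgtR (by decide), h4r]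
  -- phase 6
  obtain ⟨φ6, hel6, hg6, ho6⟩ := loop_pop_elem rgtR (nΓ M) (φ5 g2R) φ5 []
    (fun i hi => hencmem i (by rw [← h5g2]; exact hi))
    (by rw [h5g2, h5r, List.append_nil])
  have he6 : Eval (.normal [g2R] (.fort g2R (mkBodies (fun i => .pop i rgtR) (nΓ M))))
      (φ5, 0) (φ6, 0) := .normal (.fort hel6)
  have h6p : φ6 pR = List.replicate N 1 := by
    rw [ho6 pR (by decide), ho5 pR (by decide), ho4 pR (by decide), ho3 pR (by decide), h2p]
  have h6l : φ6 lftR = [] := by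
    rw [ho6 lftR (by decide), ho5 lftR (by decide), ho4 lftR (by decide),
      ho3 lftR (by decide), ho2 lftR (by decide), h1 lftR (by decide) (by decide)]
  have h6q : φ6 qR = [encQ M.q0] := by
    rw [ho6 qR (by decide), ho5 qR (by decide), ho4 qR (by decide),
      ho3 qR (by decide), ho2 qR (by decide), h1q]
  have h6g : φ6 gR = enc ++ List.replicate N (blc M encΓ) := by
    rw [ho6 gR (by decide), ho5 gR (by decide), h4g]
  have h6f : φ6 fR = [] := by
    rw [ho6 fR (by decide), ho5 fR (by decide), ho4 fR (by decide),
      ho3 fR (by decide), ho2 fR (by decide), h1 fR (by decide) (by decide)]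
  -- phase 7 : the simulation loop
  have hcfg0 : cfg 0 = M.init w := by
    rw [hcfg]
    simp
  obtain ⟨φ7, hel7, h7l, h7q, ⟨bs7, hbs7, h7g⟩, h7r, h7f⟩ :=
    sim_loop hΓinj hΓlt hQinj k N hkN cfg hcfg1 hcfg2 hhalt' (φ6 pR) 0 φ6
      (by rw [h6p]; intro i hi; exact (List.eq_of_mem_replicate hi))
      (by rw [h6p]; simp)
      (by rw [h6l, hcfg0]; rfl)
      (by rw [h6q, hcfg0]; rfl)
      ⟨List.replicate N (blc M encΓ), fun i hi => List.eq_of_mem_replicate hi,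
        by rw [h6g, hcfg0]; rfl⟩
      (by rw [h6g]; simp)
      hg6
      h6f
  have he7 : Eval (.normal [pR] (.fort pR (.single (STEP M encΓ encQ)))) (φ6, 0) (φ7, 0) :=
    .normal (.fort hel7)
  rw [hcN] at h7l h7q h7g
  -- phase 8 : cleanup
  have hNoTB : M.NoTB chalt.2.2 := by
    rw [hchalt_eq]
    exact M.noTB_iterate w k
  obtain ⟨φ8, he8, h8r, ho8⟩ := clean_eval hΓinj hΓlt φ7 chalt.2.2 bs7 h7g hbs7 hNoTB h7f h7r
  have hseq : PROG M encΓ encQ A B = .seq (.push (encQ M.q0) qR)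
      (.seq (iterSeq (POW rgtR pR B) A)
      (.seq (.normal [pR] (.fort pR (.single (.push (blc M encΓ) gR))))
      (.seq (.normal [rgtR] (.roft rgtR (mkBodies (fun i => .push i gR) (nΓ M))))
      (.seq (.normal [rgtR] (.roft rgtR (mkBodies (fun i => .push i g2R) (nΓ M))))
      (.seq (.normal [g2R] (.fort g2R (mkBodies (fun i => .pop i rgtR) (nΓ M))))
      (.seq (.normal [pR] (.fort pR (.single (STEP M encΓ encQ))))
      (.seq (.normal [gR] (.roft gR (mkBodies (cleanBody M encΓ) (nΓ M))))
      .skip))))))) := rfl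
  refine ⟨(φ8, 0), ?_, ?_, ?_, ?_, ?_⟩
  · rw [hseq]
    exact .seq he1 (.seq he2 (.seq he3 (.seq he4 (.seq he5 (.seq he6 (.seq he7
      (.seq he8 (.skip _))))))))
  · rfl
  · show φ8 lftR = _
    rw [ho8 lftR (by decide) (by decide), h7l]
  · show (φ8 qR).head? = _
    rw [ho8 qR (by decide) (by decide)]
    exact h7q
  · exact h8r
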